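/- arXiv:2201.10710 — 2 statements merged into one kernel-verified Lean document; each statement's English description precedes it below -/
import Mathlib

section
/- Let A be a finite-dimensional unimodular Hopf algebra over a field k with a nonzero left integral Λ. Then for every n ∈ ℤ the element P_n(Λ) is central in A. -/
open TensorProduct

noncomputable section

variable (k : Type*) [Field k] (A : Type*) [Ring A] [HopfAlgebra k A]

/-- `PposGen D n a = a₍₁₎ ⋯ a₍ₙ₎` (with value `ε(a)1` for `n = 0`), built from a given
comultiplication-like map `D`. -/
def PposGen (D : A →ₗ[k] A ⊗[k] A) : ℕ → (A →ₗ[k] A)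
  | 0 => Algebra.linearMap k A ∘ₗ Coalgebra.counit
  | n+1 => LinearMap.mul' k A ∘ₗ TensorProduct.map LinearMap.id (PposGen D n) ∘ₗ D

/-- Reversed products of Sweedler components: `QposGen D n a = a₍ₙ₎ ⋯ a₍₁₎`. -/
def QposGen (D : A →ₗ[k] A ⊗[k] A) : ℕ → (A →ₗ[k] A)
  | 0 => Algebra.linearMap k A ∘ₗ Coalgebra.counit
  | n+1 => LinearMap.mul' k A ∘ₗ (TensorProduct.comm k A A).toLinearMap
      ∘ₗ TensorProduct.map LinearMap.id (QposGen D n) ∘ₗ D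

/-- The `n`-th Sweedler power map associated to a comultiplication-like map `D` and an
antipode-like map `S'`: for `n ≥ 0` it is `a ↦ a₍₁₎ ⋯ a₍ₙ₎`, and for `n ≤ -1` it is
`a ↦ S'(a₍₋ₙ₎ ⋯ a₍₁₎)`. -/
def PGen (D : A →ₗ[k] A ⊗[k] A) (S' : A →ₗ[k] A) (n : ℤ) : A →ₗ[k] A :=
  if 0 ≤ n then PposGen k A D n.toNat else S' ∘ₗ QposGen k A D (-n).toNat

/-- The `n`-th Sweedler power map `P_n` of the Hopf algebra `A`. -/
def SweedlerP (n : ℤ) : A →ₗ[k] A :=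
  PGen k A Coalgebra.comul (HopfAlgebra.antipode (R := k)) n

/-- `Λ` is a left integral in `A`: `a Λ = ε(a) Λ` for all `a`. -/
def IsLeftIntegral (Λ : A) : Prop := ∀ a : A, a * Λ = Coalgebra.counit (R := k) a • Λ

/-- `α ∈ A*` is the distinguished group-like element associated to the left integral `Λ`:
`Λ a = α(a) Λ` for all `a`. -/
def IsDistinguished (Λ : A) (α : A →ₗ[k] k) : Prop := ∀ a : A, Λ * a = α a • Λ

/-- `a† = a₍₁₎ α(S⁻¹(a₍₂₎))`, as a linear map in `a` (here `Sinv` is the inverse of the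
antipode and `α` is the distinguished group-like element). -/
def dagger (α : A →ₗ[k] k) (Sinv : A →ₗ[k] A) : A →ₗ[k] A :=
  (TensorProduct.rid k A).toLinearMap ∘ₗ
    TensorProduct.map LinearMap.id (α ∘ₗ Sinv) ∘ₗ Coalgebra.comul


end

noncomputable section AuxProof

open Coalgebra HopfAlgebra LinearMap

variable (k : Type*) [Field k] (A : Type*) [Ring A] [HopfAlgebra k A]

variable {k A}
local notation "Δ" => (Coalgebra.comul (R := k) (A := A))
local notation "ε" => (Coalgebra.counit (R := k) (A := A))
local notation "𝒮" => (HopfAlgebra.antipode (R := k) (A := A))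
local notation "P" => (PposGen k A Coalgebra.comul)
local notation "Q" => (QposGen k A Coalgebra.comul)

lemma sum_counit_smul_right (a : A) {ι : Type*} (r : Repr k a ι) :
    ∑ i ∈ r.index, ε (r.left i) • r.right i = a := by
  have h := congrArg (TensorProduct.lid k A) (Coalgebra.sum_counit_tmul_eq (R := k) r)
  simp only [map_sum, TensorProduct.lid_tmul] at h
  simpa using h

lemma sum_counit_smul_left (a : A) {ι : Type*} (r : Repr k a ι) :
    ∑ i ∈ r.index, ε (r.right i) • r.left i = a := by
  have h := congrArg (TensorProduct.rid k A) (Coalgebra.sum_tmul_counit_eq (R := k) r)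
  simp only [map_sum, TensorProduct.rid_tmul] at h
  simpa using h

lemma P_zero (x : A) : P 0 x = algebraMap k A (ε x) := rfl
lemma Q_zero (x : A) : Q 0 x = algebraMap k A (ε x) := rfl

lemma P_succ (n : ℕ) (x : A) {ι : Type*} (r : Repr k x ι) :
    P (n+1) x = ∑ i ∈ r.index, r.left i * P n (r.right i) := by
  show (LinearMap.mul' k A ∘ₗ TensorProduct.map LinearMap.id (P n) ∘ₗ Δ) x = _
  simp [← r.eq, map_sum]

lemma Q_succ (n : ℕ) (x : A) {ι : Type*} (r : Repr k x ι) :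
    Q (n+1) x = ∑ i ∈ r.index, Q n (r.right i) * r.left i := by
  show (LinearMap.mul' k A ∘ₗ (TensorProduct.comm k A A).toLinearMap
      ∘ₗ TensorProduct.map LinearMap.id (Q n) ∘ₗ Δ) x = _
  simp [← r.eq, map_sum]

lemma P_one (x : A) : P 1 x = x := by
  rw [P_succ 0 x (ℛ k x)]
  simp only [P_zero, ← Algebra.commutes, ← Algebra.smul_def]
  exact sum_counit_smul_left x _

lemma Q_one (x : A) : Q 1 x = x := by
  rw [Q_succ 0 x (ℛ k x)]
  simp only [Q_zero, ← Algebra.smul_def]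
  exact sum_counit_smul_left x _

/-- Trilinear multiplication collector: `x ⊗ (y ⊗ z) ↦ f x * (g y * h z)`. -/
def tri (f g h : A →ₗ[k] A) : A ⊗[k] (A ⊗[k] A) →ₗ[k] A :=
  LinearMap.mul' k A ∘ₗ TensorProduct.map f (LinearMap.mul' k A ∘ₗ TensorProduct.map g h)

lemma tri_tmul (f g h : A →ₗ[k] A) (x y z : A) :
    tri f g h (x ⊗ₜ (y ⊗ₜ z)) = f x * (g y * h z) := by
  simp [tri]

/-- Reversed trilinear collector: `x ⊗ (y ⊗ z) ↦ (h z * g y) * f x`. -/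
def tri' (f g h : A →ₗ[k] A) : A ⊗[k] (A ⊗[k] A) →ₗ[k] A :=
  LinearMap.mul' k A ∘ₗ (TensorProduct.comm k A A).toLinearMap ∘ₗ
    TensorProduct.map f (LinearMap.mul' k A ∘ₗ (TensorProduct.comm k A A).toLinearMap
      ∘ₗ TensorProduct.map g h)

lemma tri'_tmul (f g h : A →ₗ[k] A) (x y z : A) :
    tri' f g h (x ⊗ₜ (y ⊗ₜ z)) = (h z * g y) * f x := by
  simp [tri']

lemma tri_coassoc (f g h : A →ₗ[k] A) (x : A) {ι : Type*} (r : Repr k x ι)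
    {κ₁ κ₂ : Type*} (a₁ : ∀ i, Repr k (r.left i) κ₁) (a₂ : ∀ i, Repr k (r.right i) κ₂) :
    ∑ i ∈ r.index, ∑ j ∈ (a₁ i).index,
      f ((a₁ i).left j) * (g ((a₁ i).right j) * h (r.right i))
    = ∑ i ∈ r.index, ∑ j ∈ (a₂ i).index,
      f (r.left i) * (g ((a₂ i).left j) * h ((a₂ i).right j)) := by
  have h2 := congrArg (tri f g h) (Coalgebra.sum_tmul_tmul_eq r a₁ a₂)
  simpa only [map_sum, tri_tmul] using h2

lemma tri'_coassoc (f g h : A →ₗ[k] A) (x : A) {ι : Type*} (r : Repr k x ι)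
    {κ₁ κ₂ : Type*} (a₁ : ∀ i, Repr k (r.left i) κ₁) (a₂ : ∀ i, Repr k (r.right i) κ₂) :
    ∑ i ∈ r.index, ∑ j ∈ (a₁ i).index,
      (h (r.right i) * g ((a₁ i).right j)) * f ((a₁ i).left j)
    = ∑ i ∈ r.index, ∑ j ∈ (a₂ i).index,
      (h ((a₂ i).right j) * g ((a₂ i).left j)) * f (r.left i) := by
  have h2 := congrArg (tri' f g h) (Coalgebra.sum_tmul_tmul_eq r a₁ a₂)
  simpa only [map_sum, tri'_tmul] using h2

lemma repr_mul_sum (f g : A →ₗ[k] A) (x : A) {ι : Type*} (r : Repr k x ι) :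
    ∑ i ∈ r.index, f (r.left i) * g (r.right i)
      = LinearMap.mul' k A (TensorProduct.map f g (Δ x)) := by
  rw [← r.eq, map_sum, map_sum]
  simp

lemma repr_mul_sum' (f g : A →ₗ[k] A) (x : A) {ι : Type*} (r : Repr k x ι) :
    ∑ i ∈ r.index, f (r.right i) * g (r.left i)
      = LinearMap.mul' k A (TensorProduct.map f g ((TensorProduct.comm k A A) (Δ x))) := by
  rw [← r.eq, map_sum, map_sum, map_sum]
  simp

lemma P_succ'_aux (n : ℕ) : ∀ (x : A),
    P (n+1) x = ∑ i ∈ (ℛ k x).index, P n ((ℛ k x).left i) * (ℛ k x).right i := by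
  induction n with
  | zero =>
    intro x
    rw [P_one]
    simp only [P_zero, ← Algebra.smul_def]
    exact (sum_counit_smul_right x _).symm
  | succ n ih =>
    intro x
    set r := ℛ k x
    set a₁ : ∀ i, Repr k (r.left i) (A × A) := fun i => ℛ k (r.left i) with ha₁
    set a₂ : ∀ i, Repr k (r.right i) (A × A) := fun i => ℛ k (r.right i) with ha₂
    rw [P_succ (n+1) x r]
    calc ∑ i ∈ r.index, r.left i * P (n+1) (r.right i)
        = ∑ i ∈ r.index, ∑ j ∈ (a₂ i).index,
            LinearMap.id (r.left i) * (P n ((a₂ i).left j) * LinearMap.id ((a₂ i).right j)) := by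
          refine Finset.sum_congr rfl fun i _ => ?_
          rw [ih (r.right i), Finset.mul_sum]
          simp
          rfl
      _ = ∑ i ∈ r.index, ∑ j ∈ (a₁ i).index,
            LinearMap.id ((a₁ i).left j) * (P n ((a₁ i).right j) * LinearMap.id (r.right i)) :=
          (tri_coassoc _ _ _ x r a₁ a₂).symm
      _ = ∑ i ∈ r.index, P (n+1) (r.left i) * r.right i := by
          refine Finset.sum_congr rfl fun i _ => ?_
          rw [P_succ n (r.left i) (a₁ i), Finset.sum_mul]
          simp [mul_assoc]

lemma P_succ' (n : ℕ) (x : A) {ι : Type*} (r : Repr k x ι) :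
    P (n+1) x = ∑ i ∈ r.index, P n (r.left i) * r.right i := by
  have h1 := repr_mul_sum (P n) LinearMap.id x r
  have h2 := repr_mul_sum (P n) LinearMap.id x (ℛ k x)
  simp only [LinearMap.id_apply] at h1 h2
  rw [h1, ← h2]
  exact P_succ'_aux n x

lemma Q_succ'_aux (n : ℕ) : ∀ (x : A),
    Q (n+1) x = ∑ i ∈ (ℛ k x).index, (ℛ k x).right i * Q n ((ℛ k x).left i) := by
  induction n with
  | zero =>
    intro x
    rw [Q_one]
    simp only [Q_zero, ← Algebra.commutes, ← Algebra.smul_def]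
    exact (sum_counit_smul_right x _).symm
  | succ n ih =>
    intro x
    set r := ℛ k x
    set a₁ : ∀ i, Repr k (r.left i) (A × A) := fun i => ℛ k (r.left i) with ha₁
    set a₂ : ∀ i, Repr k (r.right i) (A × A) := fun i => ℛ k (r.right i) with ha₂
    rw [Q_succ (n+1) x r]
    calc ∑ i ∈ r.index, Q (n+1) (r.right i) * r.left i
        = ∑ i ∈ r.index, ∑ j ∈ (a₂ i).index,
            (LinearMap.id ((a₂ i).right j) * Q n ((a₂ i).left j)) * LinearMap.id (r.left i) := by
          refine Finset.sum_congr rfl fun i _ => ?_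
          rw [ih (r.right i), Finset.sum_mul]
          simp
          rfl
      _ = ∑ i ∈ r.index, ∑ j ∈ (a₁ i).index,
            (LinearMap.id (r.right i) * Q n ((a₁ i).right j)) * LinearMap.id ((a₁ i).left j) :=
          (tri'_coassoc _ _ _ x r a₁ a₂).symm
      _ = ∑ i ∈ r.index, r.right i * Q (n+1) (r.left i) := by
          refine Finset.sum_congr rfl fun i _ => ?_
          rw [Q_succ n (r.left i) (a₁ i), Finset.mul_sum]
          simp [mul_assoc]

lemma Q_succ' (n : ℕ) (x : A) {ι : Type*} (r : Repr k x ι) :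
    Q (n+1) x = ∑ i ∈ r.index, r.right i * Q n (r.left i) := by
  have h1 := repr_mul_sum' LinearMap.id (Q n) x r
  have h2 := repr_mul_sum' LinearMap.id (Q n) x (ℛ k x)
  simp only [LinearMap.id_apply] at h1 h2
  rw [h1, ← h2]
  exact Q_succ'_aux n x

/-- A representation of `comul (a*b)` from representations of `a` and `b`. -/
def ReprMul {a b : A} {ι₁ ι₂ : Type*} (ra : Repr k a ι₁) (rb : Repr k b ι₂) : Repr k (a * b) (ι₁ × ι₂) where
  index := ra.index ×ˢ rb.index
  left p := ra.left p.1 * rb.left p.2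
  right p := ra.right p.1 * rb.right p.2
  eq := by
    rw [Bialgebra.comul_mul, ← ra.eq, ← rb.eq, Finset.sum_mul_sum]
    rw [Finset.sum_product]
    simp [Algebra.TensorProduct.tmul_mul_tmul]

lemma P_succ_mul (n : ℕ) (u c : A) {ι₁ ι₂ : Type*} (ru : Repr k u ι₁) (rc : Repr k c ι₂) :
    P (n+1) (u*c) = ∑ j ∈ ru.index, ∑ l ∈ rc.index,
      (ru.left j * rc.left l) * P n (ru.right j * rc.right l) := by
  rw [P_succ n (u*c) (ReprMul ru rc), ← Finset.sum_product']
  rfl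

lemma Q_succ'_mul (n : ℕ) (u c : A) {ι₁ ι₂ : Type*} (ru : Repr k u ι₁) (rc : Repr k c ι₂) :
    Q (n+1) (u*c) = ∑ j ∈ ru.index, ∑ l ∈ rc.index,
      (ru.right j * rc.right l) * Q n (ru.left j * rc.left l) := by
  rw [Q_succ' n (u*c) (ReprMul ru rc), ← Finset.sum_product']
  rfl

/-- The heart of the argument: `∑ Pₙ(y₍₁₎ a) y₍₂₎ = ∑ y₍₁₎ Pₙ(a y₍₂₎)`
(both equal the alternating word `y₍₁₎a₍₁₎y₍₂₎a₍₂₎⋯`). -/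
lemma bridgeP_aux : ∀ (n : ℕ) (a y : A),
    ∑ i ∈ (ℛ k y).index, P n ((ℛ k y).left i * a) * (ℛ k y).right i
    = ∑ i ∈ (ℛ k y).index, (ℛ k y).left i * P n (a * (ℛ k y).right i) := by
  intro n
  induction n with
  | zero =>
    intro a y
    have l1 : ∀ i ∈ (ℛ k y).index,
        P 0 ((ℛ k y).left i * a) * (ℛ k y).right i
          = ε a • (ε ((ℛ k y).left i) • (ℛ k y).right i) := by
      intro i _
      rw [P_zero, Bialgebra.counit_mul, ← Algebra.smul_def, mul_comm, mul_smul]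
    have r1 : ∀ i ∈ (ℛ k y).index,
        (ℛ k y).left i * P 0 (a * (ℛ k y).right i)
          = ε a • (ε ((ℛ k y).right i) • (ℛ k y).left i) := by
      intro i _
      rw [P_zero, Bialgebra.counit_mul, ← Algebra.commutes, ← Algebra.smul_def, mul_smul]
    rw [Finset.sum_congr rfl l1, Finset.sum_congr rfl r1, ← Finset.smul_sum, ← Finset.smul_sum,
      sum_counit_smul_right y _, sum_counit_smul_left y _]
  | succ n ih =>
    intro a y
    calc ∑ i ∈ (ℛ k y).index, P (n+1) ((ℛ k y).left i * a) * (ℛ k y).right i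
        = ∑ i ∈ (ℛ k y).index, ∑ j ∈ (ℛ k ((ℛ k y).left i)).index, ∑ l ∈ (ℛ k a).index,
            ((ℛ k ((ℛ k y).left i)).left j * (ℛ k a).left l) *
              (P n ((ℛ k ((ℛ k y).left i)).right j * (ℛ k a).right l) * (ℛ k y).right i) := by
          refine Finset.sum_congr rfl fun i _ => ?_
          rw [P_succ_mul n _ a (ℛ k ((ℛ k y).left i)) (ℛ k a), Finset.sum_mul]
          refine Finset.sum_congr rfl fun j _ => ?_
          rw [Finset.sum_mul]
          exact Finset.sum_congr rfl fun l _ => by rw [mul_assoc]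
      _ = ∑ l ∈ (ℛ k a).index, ∑ i ∈ (ℛ k y).index, ∑ j ∈ (ℛ k ((ℛ k y).left i)).index,
            ((ℛ k ((ℛ k y).left i)).left j * (ℛ k a).left l) *
              (P n ((ℛ k ((ℛ k y).left i)).right j * (ℛ k a).right l) * (ℛ k y).right i) := by
          rw [Finset.sum_comm]
          exact Finset.sum_congr rfl fun l _ => Finset.sum_comm
      _ = ∑ l ∈ (ℛ k a).index, ∑ i ∈ (ℛ k y).index, ∑ j ∈ (ℛ k ((ℛ k y).right i)).index,
            ((ℛ k y).left i * (ℛ k a).left l) *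
              (P n ((ℛ k ((ℛ k y).right i)).left j * (ℛ k a).right l) *
                (ℛ k ((ℛ k y).right i)).right j) := by
          refine Finset.sum_congr rfl fun l _ => ?_
          have := tri_coassoc (LinearMap.mulRight k ((ℛ k a).left l))
            (P n ∘ₗ LinearMap.mulRight k ((ℛ k a).right l)) LinearMap.id y (ℛ k y)
            (fun i => ℛ k ((ℛ k y).left i)) (fun i => ℛ k ((ℛ k y).right i))
          simpa only [LinearMap.mulRight_apply, LinearMap.id_apply, LinearMap.coe_comp,
            Function.comp_apply] using this
      _ = ∑ l ∈ (ℛ k a).index, ∑ i ∈ (ℛ k y).index, ∑ j ∈ (ℛ k ((ℛ k y).right i)).index,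
            ((ℛ k y).left i * (ℛ k a).left l) *
              ((ℛ k ((ℛ k y).right i)).left j *
                P n ((ℛ k a).right l * (ℛ k ((ℛ k y).right i)).right j)) := by
          refine Finset.sum_congr rfl fun l _ => Finset.sum_congr rfl fun i _ => ?_
          conv_lhs => rw [← Finset.mul_sum]
          conv_rhs => rw [← Finset.mul_sum]
          rw [ih ((ℛ k a).right l) ((ℛ k y).right i)]
      _ = ∑ i ∈ (ℛ k y).index, (ℛ k y).left i * P (n+1) (a * (ℛ k y).right i) := by
          rw [Finset.sum_comm]
          refine Finset.sum_congr rfl fun i _ => ?_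
          conv_rhs => rw [P_succ_mul n a _ (ℛ k a) (ℛ k ((ℛ k y).right i)), Finset.mul_sum]
          refine Finset.sum_congr rfl fun l _ => ?_
          conv_rhs => rw [Finset.mul_sum]
          refine Finset.sum_congr rfl fun j _ => ?_
          simp only [mul_assoc]

/-- Mirror bridge: `∑ Qₙ(y₍₂₎ b) y₍₁₎ = ∑ y₍₂₎ Qₙ(b y₍₁₎)`. -/
lemma bridgeQ_aux : ∀ (n : ℕ) (b y : A),
    ∑ i ∈ (ℛ k y).index, Q n ((ℛ k y).right i * b) * (ℛ k y).left i
    = ∑ i ∈ (ℛ k y).index, (ℛ k y).right i * Q n (b * (ℛ k y).left i) := by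
  intro n
  induction n with
  | zero =>
    intro b y
    have l1 : ∀ i ∈ (ℛ k y).index,
        Q 0 ((ℛ k y).right i * b) * (ℛ k y).left i
          = ε b • (ε ((ℛ k y).right i) • (ℛ k y).left i) := by
      intro i _
      rw [Q_zero, Bialgebra.counit_mul, ← Algebra.smul_def, mul_comm, mul_smul]
    have r1 : ∀ i ∈ (ℛ k y).index,
        (ℛ k y).right i * Q 0 (b * (ℛ k y).left i)
          = ε b • (ε ((ℛ k y).left i) • (ℛ k y).right i) := by
      intro i _
      rw [Q_zero, Bialgebra.counit_mul, ← Algebra.commutes, ← Algebra.smul_def, mul_smul]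
    rw [Finset.sum_congr rfl l1, Finset.sum_congr rfl r1, ← Finset.smul_sum, ← Finset.smul_sum,
      sum_counit_smul_left y _, sum_counit_smul_right y _]
  | succ n ih =>
    intro b y
    calc ∑ i ∈ (ℛ k y).index, Q (n+1) ((ℛ k y).right i * b) * (ℛ k y).left i
        = ∑ i ∈ (ℛ k y).index, ∑ j ∈ (ℛ k ((ℛ k y).right i)).index, ∑ l ∈ (ℛ k b).index,
            ((ℛ k ((ℛ k y).right i)).right j * (ℛ k b).right l) *
              (Q n ((ℛ k ((ℛ k y).right i)).left j * (ℛ k b).left l)) * (ℛ k y).left i := by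
          refine Finset.sum_congr rfl fun i _ => ?_
          rw [Q_succ'_mul n _ b (ℛ k ((ℛ k y).right i)) (ℛ k b), Finset.sum_mul]
          refine Finset.sum_congr rfl fun j _ => ?_
          rw [Finset.sum_mul]
      _ = ∑ l ∈ (ℛ k b).index, ∑ i ∈ (ℛ k y).index, ∑ j ∈ (ℛ k ((ℛ k y).right i)).index,
            ((ℛ k ((ℛ k y).right i)).right j * (ℛ k b).right l) *
              (Q n ((ℛ k ((ℛ k y).right i)).left j * (ℛ k b).left l)) * (ℛ k y).left i := by
          rw [Finset.sum_comm]
          exact Finset.sum_congr rfl fun l _ => Finset.sum_comm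
      _ = ∑ l ∈ (ℛ k b).index, ∑ i ∈ (ℛ k y).index, ∑ j ∈ (ℛ k ((ℛ k y).left i)).index,
            ((ℛ k y).right i * (ℛ k b).right l) *
              (Q n ((ℛ k ((ℛ k y).left i)).right j * (ℛ k b).left l)) *
                (ℛ k ((ℛ k y).left i)).left j := by
          refine Finset.sum_congr rfl fun l _ => ?_
          have := tri'_coassoc LinearMap.id
            (Q n ∘ₗ LinearMap.mulRight k ((ℛ k b).left l))
            (LinearMap.mulRight k ((ℛ k b).right l)) y (ℛ k y)
            (fun i => ℛ k ((ℛ k y).left i)) (fun i => ℛ k ((ℛ k y).right i))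
          simpa only [LinearMap.mulRight_apply, LinearMap.id_apply, LinearMap.coe_comp,
            Function.comp_apply] using this.symm
      _ = ∑ l ∈ (ℛ k b).index, ∑ i ∈ (ℛ k y).index, ∑ j ∈ (ℛ k ((ℛ k y).left i)).index,
            ((ℛ k y).right i * (ℛ k b).right l) *
              ((ℛ k ((ℛ k y).left i)).right j *
                Q n ((ℛ k b).left l * (ℛ k ((ℛ k y).left i)).left j)) := by
          refine Finset.sum_congr rfl fun l _ => Finset.sum_congr rfl fun i _ => ?_
          simp only [mul_assoc]
          conv_lhs => rw [← Finset.mul_sum, ← Finset.mul_sum]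
          conv_rhs => rw [← Finset.mul_sum, ← Finset.mul_sum]
          rw [ih ((ℛ k b).left l) ((ℛ k y).left i)]
      _ = ∑ i ∈ (ℛ k y).index, (ℛ k y).right i * Q (n+1) (b * (ℛ k y).left i) := by
          rw [Finset.sum_comm]
          refine Finset.sum_congr rfl fun i _ => ?_
          conv_rhs => rw [Q_succ'_mul n b _ (ℛ k b) (ℛ k ((ℛ k y).left i)), Finset.mul_sum]
          refine Finset.sum_congr rfl fun l _ => ?_
          conv_rhs => rw [Finset.mul_sum]
          refine Finset.sum_congr rfl fun j _ => ?_
          simp only [mul_assoc]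

section Integral

variable (Λ : A)

lemma comul_int_left (hL : ∀ a : A, a * Λ = ε a • Λ) (x : A) :
    Δ x * Δ Λ = ε x • Δ Λ := by
  rw [← Bialgebra.comul_mul, hL x, map_smul]

lemma comul_int_right (hR : ∀ a : A, Λ * a = ε a • Λ) (x : A) :
    Δ Λ * Δ x = ε x • Δ Λ := by
  rw [← Bialgebra.comul_mul, hR x, map_smul]

lemma intA (hR : ∀ a : A, Λ * a = ε a • Λ) (a : A) :
    Δ Λ * (a ⊗ₜ (1:A)) = Δ Λ * ((1:A) ⊗ₜ 𝒮 a) := by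
  classical
  set r := ℛ k a
  set rl : ∀ i, Repr k (r.left i) (A × A) := fun i => ℛ k (r.left i) with hrl
  set rr : ∀ i, Repr k (r.right i) (A × A) := fun i => ℛ k (r.right i) with hrr
  have step1 : (a ⊗ₜ[k] (1:A)) = ∑ i ∈ r.index, ∑ j ∈ (rl i).index,
      (rl i).left j ⊗ₜ[k] ((rl i).right j * 𝒮 (r.right i)) := by
    have hco := congrArg
      (TensorProduct.map (LinearMap.id (R := k) (M := A))
        (LinearMap.mul' k A ∘ₗ TensorProduct.map LinearMap.id 𝒮))
      (Coalgebra.sum_tmul_tmul_eq r rl rr)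
    simp only [map_sum, TensorProduct.map_tmul, LinearMap.id_apply, LinearMap.coe_comp,
      Function.comp_apply, LinearMap.mul'_apply] at hco
    rw [hco]
    have inner : ∀ i ∈ r.index, ∑ j ∈ (rr i).index,
        r.left i ⊗ₜ[k] ((rr i).left j * 𝒮 ((rr i).right j))
        = ε (r.right i) • (r.left i ⊗ₜ[k] (1:A)) := by
      intro i _
      rw [← TensorProduct.tmul_sum, sum_mul_antipode_eq_algebraMap_counit (rr i), Algebra.algebraMap_eq_smul_one,
        TensorProduct.tmul_smul]
    rw [Finset.sum_congr rfl inner]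
    simp only [TensorProduct.smul_tmul']
    rw [← TensorProduct.sum_tmul, sum_counit_smul_left a r]
  calc Δ Λ * (a ⊗ₜ[k] (1:A))
      = ∑ i ∈ r.index, ∑ j ∈ (rl i).index,
          (Δ Λ * ((rl i).left j ⊗ₜ[k] (rl i).right j)) * ((1:A) ⊗ₜ[k] 𝒮 (r.right i)) := by
        rw [step1, Finset.mul_sum]
        refine Finset.sum_congr rfl fun i _ => ?_
        rw [Finset.mul_sum]
        refine Finset.sum_congr rfl fun j _ => ?_
        rw [mul_assoc, Algebra.TensorProduct.tmul_mul_tmul, mul_one]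
    _ = ∑ i ∈ r.index, (ε (r.left i) • Δ Λ) * ((1:A) ⊗ₜ[k] 𝒮 (r.right i)) := by
        refine Finset.sum_congr rfl fun i _ => ?_
        rw [← Finset.sum_mul, ← Finset.mul_sum, (rl i).eq, comul_int_right Λ hR]
    _ = Δ Λ * ((1:A) ⊗ₜ[k] 𝒮 a) := by
        have h3 : ∀ i ∈ r.index, (ε (r.left i) • Δ Λ) * ((1:A) ⊗ₜ[k] 𝒮 (r.right i))
            = Δ Λ * ((1:A) ⊗ₜ[k] 𝒮 (ε (r.left i) • r.right i)) := by
          intro i _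
          rw [smul_mul_assoc, map_smul, TensorProduct.tmul_smul, mul_smul_comm]
        rw [Finset.sum_congr rfl h3, ← Finset.mul_sum, ← TensorProduct.tmul_sum, ← map_sum,
          sum_counit_smul_right a r]

lemma intB (hL : ∀ a : A, a * Λ = ε a • Λ) (a : A) :
    ((1:A) ⊗ₜ a) * Δ Λ = (𝒮 a ⊗ₜ (1:A)) * Δ Λ := by
  classical
  set r := ℛ k a
  set rl : ∀ i, Repr k (r.left i) (A × A) := fun i => ℛ k (r.left i) with hrl
  set rr : ∀ i, Repr k (r.right i) (A × A) := fun i => ℛ k (r.right i) with hrr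
  have step1 : ((1:A) ⊗ₜ[k] a) = ∑ i ∈ r.index, ∑ j ∈ (rr i).index,
      (𝒮 (r.left i) * (rr i).left j) ⊗ₜ[k] (rr i).right j := by
    have hco := congrArg
      (LinearMap.rTensor A (LinearMap.mul' k A ∘ₗ TensorProduct.map 𝒮 LinearMap.id)
        ∘ₗ (TensorProduct.assoc k A A A).symm.toLinearMap)
      (Coalgebra.sum_tmul_tmul_eq r rl rr)
    simp only [map_sum, LinearMap.coe_comp, Function.comp_apply, LinearEquiv.coe_coe,
      TensorProduct.assoc_symm_tmul, LinearMap.rTensor_tmul, TensorProduct.map_tmul,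
      LinearMap.id_apply, LinearMap.mul'_apply] at hco
    rw [← hco]
    have inner : ∀ i ∈ r.index, ∑ j ∈ (rl i).index,
        (𝒮 ((rl i).left j) * (rl i).right j) ⊗ₜ[k] (r.right i)
        = ε (r.left i) • ((1:A) ⊗ₜ[k] r.right i) := by
      intro i _
      rw [← TensorProduct.sum_tmul, sum_antipode_mul_eq_algebraMap_counit (rl i), Algebra.algebraMap_eq_smul_one,
        TensorProduct.smul_tmul']
    rw [Finset.sum_congr rfl inner]
    simp only [← TensorProduct.tmul_smul]
    rw [← TensorProduct.tmul_sum, sum_counit_smul_right a r]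
  calc ((1:A) ⊗ₜ[k] a) * Δ Λ
      = ∑ i ∈ r.index, (𝒮 (r.left i) ⊗ₜ[k] (1:A)) *
          (∑ j ∈ (rr i).index, ((rr i).left j ⊗ₜ[k] (rr i).right j) * Δ Λ) := by
        rw [step1, Finset.sum_mul]
        refine Finset.sum_congr rfl fun i _ => ?_
        rw [Finset.mul_sum, Finset.sum_mul]
        refine Finset.sum_congr rfl fun j _ => ?_
        rw [← mul_assoc, Algebra.TensorProduct.tmul_mul_tmul, one_mul]
    _ = ∑ i ∈ r.index, (𝒮 (r.left i) ⊗ₜ[k] (1:A)) * (ε (r.right i) • Δ Λ) := by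
        refine Finset.sum_congr rfl fun i _ => ?_
        rw [← Finset.sum_mul, (rr i).eq, comul_int_left Λ hL]
    _ = (𝒮 a ⊗ₜ[k] (1:A)) * Δ Λ := by
        have h3 : ∀ i ∈ r.index, (𝒮 (r.left i) ⊗ₜ[k] (1:A)) * (ε (r.right i) • Δ Λ)
            = (𝒮 (ε (r.right i) • r.left i) ⊗ₜ[k] (1:A)) * Δ Λ := by
          intro i _
          rw [mul_smul_comm, map_smul, ← smul_mul_assoc, TensorProduct.smul_tmul']
        rw [Finset.sum_congr rfl h3, ← Finset.sum_mul, ← TensorProduct.sum_tmul, ← map_sum,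
          sum_counit_smul_left a r]

lemma comul_mul_tmul' (c d : A) {ι : Type*} (r : Repr k Λ ι) :
    Δ Λ * (c ⊗ₜ[k] d) = ∑ i ∈ r.index, (r.left i * c) ⊗ₜ[k] (r.right i * d) := by
  rw [← r.eq, Finset.sum_mul]
  simp [Algebra.TensorProduct.tmul_mul_tmul]

lemma tmul_mul_comul' (c d : A) {ι : Type*} (r : Repr k Λ ι) :
    (c ⊗ₜ[k] d) * Δ Λ = ∑ i ∈ r.index, (c * r.left i) ⊗ₜ[k] (d * r.right i) := by
  rw [← r.eq, Finset.mul_sum]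
  simp [Algebra.TensorProduct.tmul_mul_tmul]

/-- `P (n+1) Λ` commutes with everything in the image of the antipode. -/
lemma P_comm_S (hL : ∀ a : A, a * Λ = ε a • Λ) (hR : ∀ a : A, Λ * a = ε a • Λ)
    (n : ℕ) (a : A) :
    P (n+1) Λ * 𝒮 a = 𝒮 a * P (n+1) Λ := by
  have hA := intA Λ hR a
  rw [comul_mul_tmul' Λ a 1 (ℛ k Λ), comul_mul_tmul' Λ 1 (𝒮 a) (ℛ k Λ)] at hA
  simp only [mul_one] at hA
  have e1 := congrArg (fun t => LinearMap.mul' k A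
    (TensorProduct.map (P n) (LinearMap.id (R := k) (M := A)) t)) hA
  simp only [map_sum, TensorProduct.map_tmul, LinearMap.mul'_apply, LinearMap.id_apply] at e1
  -- e1 : ∑ P n (lᵢ * a) * rᵢ = ∑ P n lᵢ * (rᵢ * 𝒮 a)
  have hB := intB Λ hL a
  rw [tmul_mul_comul' Λ 1 a (ℛ k Λ), tmul_mul_comul' Λ (𝒮 a) 1 (ℛ k Λ)] at hB
  simp only [one_mul] at hB
  have e2 := congrArg (fun t => LinearMap.mul' k A
    (TensorProduct.map (LinearMap.id (R := k) (M := A)) (P n) t)) hB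
  simp only [map_sum, TensorProduct.map_tmul, LinearMap.mul'_apply, LinearMap.id_apply] at e2
  -- e2 : ∑ lᵢ * P n (a * rᵢ) = ∑ (𝒮 a * lᵢ) * P n rᵢ
  have hP : P (n+1) Λ * 𝒮 a = ∑ i ∈ (ℛ k Λ).index, P n ((ℛ k Λ).left i) * ((ℛ k Λ).right i * 𝒮 a) := by
    rw [P_succ' n Λ (ℛ k Λ), Finset.sum_mul]
    simp only [mul_assoc]
  have hS : 𝒮 a * P (n+1) Λ = ∑ i ∈ (ℛ k Λ).index, 𝒮 a * (ℛ k Λ).left i * P n ((ℛ k Λ).right i) := by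
    rw [P_succ n Λ (ℛ k Λ), Finset.mul_sum]
    simp only [mul_assoc]
  rw [hP, hS, ← e1, bridgeP_aux n a Λ, e2]

/-- `Q (n+1) Λ` is central. -/
lemma Q_central (hL : ∀ a : A, a * Λ = ε a • Λ) (hR : ∀ a : A, Λ * a = ε a • Λ)
    (n : ℕ) (a : A) :
    a * Q (n+1) Λ = Q (n+1) Λ * a := by
  have hA := intA Λ hR a
  rw [comul_mul_tmul' Λ a 1 (ℛ k Λ), comul_mul_tmul' Λ 1 (𝒮 a) (ℛ k Λ)] at hA
  simp only [mul_one] at hA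
  have e1 := congrArg (fun t => LinearMap.mul' k A
    ((TensorProduct.comm k A A) (TensorProduct.map (LinearMap.id (R := k) (M := A)) (Q n) t))) hA
  simp only [map_sum, TensorProduct.map_tmul, TensorProduct.comm_tmul, LinearMap.mul'_apply,
    LinearMap.id_apply] at e1
  -- e1 : ∑ Q n rᵢ * (lᵢ * a) = ∑ Q n (rᵢ * 𝒮 a) * lᵢ
  have hB := intB Λ hL a
  rw [tmul_mul_comul' Λ 1 a (ℛ k Λ), tmul_mul_comul' Λ (𝒮 a) 1 (ℛ k Λ)] at hB
  simp only [one_mul] at hB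
  have e2 := congrArg (fun t => LinearMap.mul' k A
    ((TensorProduct.comm k A A) (TensorProduct.map (Q n) (LinearMap.id (R := k) (M := A)) t))) hB
  simp only [map_sum, TensorProduct.map_tmul, TensorProduct.comm_tmul, LinearMap.mul'_apply,
    LinearMap.id_apply] at e2
  -- e2 : ∑ (a * rᵢ) * Q n lᵢ = ∑ rᵢ * Q n (𝒮 a * lᵢ)
  have hQ : Q (n+1) Λ * a = ∑ i ∈ (ℛ k Λ).index, Q n ((ℛ k Λ).right i) * ((ℛ k Λ).left i * a) := by
    rw [Q_succ n Λ (ℛ k Λ), Finset.sum_mul]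
    simp only [mul_assoc]
  have hQ' : a * Q (n+1) Λ = ∑ i ∈ (ℛ k Λ).index, (a * (ℛ k Λ).right i) * Q n ((ℛ k Λ).left i) := by
    rw [Q_succ' n Λ (ℛ k Λ), Finset.mul_sum]
    simp only [mul_assoc]
  rw [hQ, hQ', e2, ← bridgeQ_aux n (𝒮 a) Λ, ← e1]

/-- If `x` commutes with the image of the antipode, then `x` is central
(using `a = ∑ a₍₁₎ 𝒮(a₍₂₎) a₍₃₎`). -/
lemma central_of_S_comm (x : A) (hx : ∀ b : A, x * 𝒮 b = 𝒮 b * x) (a : A) :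
    a * x = x * a := by
  have key1 : a ⊗ₜ[k] (1:A) = ∑ i ∈ (ℛ k a).index, ∑ j ∈ (ℛ k ((ℛ k a).right i)).index,
      (ℛ k a).left i ⊗ₜ[k]
        (𝒮 ((ℛ k ((ℛ k a).right i)).left j) * (ℛ k ((ℛ k a).right i)).right j) := by
    have inner : ∀ i ∈ (ℛ k a).index, ∑ j ∈ (ℛ k ((ℛ k a).right i)).index,
        (ℛ k a).left i ⊗ₜ[k]
          (𝒮 ((ℛ k ((ℛ k a).right i)).left j) * (ℛ k ((ℛ k a).right i)).right j)
        = ε ((ℛ k a).right i) • ((ℛ k a).left i ⊗ₜ[k] (1:A)) := by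
      intro i _
      rw [← TensorProduct.tmul_sum, sum_antipode_mul_eq_algebraMap_counit (ℛ k ((ℛ k a).right i)),
        Algebra.algebraMap_eq_smul_one, TensorProduct.tmul_smul]
    rw [Finset.sum_congr rfl inner]
    simp only [TensorProduct.smul_tmul']
    rw [← TensorProduct.sum_tmul, sum_counit_smul_left a (ℛ k a)]
  have step := congrArg (fun t => LinearMap.mul' k A
    (TensorProduct.map (LinearMap.mulRight k x) (LinearMap.id (R := k) (M := A)) t)) key1
  simp only [map_sum, TensorProduct.map_tmul, LinearMap.mul'_apply, LinearMap.mulRight_apply,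
    LinearMap.id_apply, mul_one] at step
  rw [step]
  have swap : ∀ i ∈ (ℛ k a).index, ∑ j ∈ (ℛ k ((ℛ k a).right i)).index,
      ((ℛ k a).left i * x) *
        (𝒮 ((ℛ k ((ℛ k a).right i)).left j) * (ℛ k ((ℛ k a).right i)).right j)
      = ∑ j ∈ (ℛ k ((ℛ k a).right i)).index,
      LinearMap.id (R := k) (M := A) ((ℛ k a).left i) *
        (𝒮 ((ℛ k ((ℛ k a).right i)).left j) *
          (LinearMap.mulLeft k x ((ℛ k ((ℛ k a).right i)).right j))) := by
    intro i _
    refine Finset.sum_congr rfl fun j _ => ?_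
    rw [mul_assoc, ← mul_assoc x, hx, mul_assoc]
    simp
  rw [Finset.sum_congr rfl swap,
    ← tri_coassoc LinearMap.id (𝒮) (LinearMap.mulLeft k x) a (ℛ k a)
      (fun i => ℛ k ((ℛ k a).left i)) (fun i => ℛ k ((ℛ k a).right i))]
  have fin : ∀ i ∈ (ℛ k a).index, ∑ j ∈ (ℛ k ((ℛ k a).left i)).index,
      LinearMap.id (R := k) (M := A) ((ℛ k ((ℛ k a).left i)).left j) *
        (𝒮 ((ℛ k ((ℛ k a).left i)).right j) * (LinearMap.mulLeft k x ((ℛ k a).right i)))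
      = ε ((ℛ k a).left i) • (x * (ℛ k a).right i) := by
    intro i _
    simp only [LinearMap.id_apply, LinearMap.mulLeft_apply, ← mul_assoc]
    rw [← Finset.sum_mul, ← Finset.sum_mul, sum_mul_antipode_eq_algebraMap_counit (ℛ k ((ℛ k a).left i)),
      ← Algebra.smul_def, smul_mul_assoc]
  rw [Finset.sum_congr rfl fin]
  simp only [← mul_smul_comm]
  rw [← Finset.mul_sum, sum_counit_smul_right a (ℛ k a)]


section AntipodeMul

variable (a b : A)

/-- The common middle expression `∑ 𝒮(a₍₁₎b₍₁₎) (a₍₂₎b₍₂₎) 𝒮(b₍₃₎) 𝒮(a₍₃₎)`. -/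
def Emid : A :=
  ∑ l ∈ (ℛ k b).index, ∑ m ∈ (ℛ k ((ℛ k b).right l)).index, ∑ i ∈ (ℛ k a).index, ∑ j ∈ (ℛ k ((ℛ k a).right i)).index, 
        𝒮 ((ℛ k a).left i * (ℛ k b).left l) * (((ℛ k ((ℛ k a).right i)).left j * (ℛ k ((ℛ k b).right l)).left m) * (𝒮 ((ℛ k ((ℛ k b).right l)).right m) * 𝒮 ((ℛ k ((ℛ k a).right i)).right j)))

lemma Emid_eq_antipode_mul : Emid (k := k) a b = 𝒮 (a * b) := by
  unfold Emid
  calc ∑ l ∈ (ℛ k b).index, ∑ m ∈ (ℛ k ((ℛ k b).right l)).index, ∑ i ∈ (ℛ k a).index, ∑ j ∈ (ℛ k ((ℛ k a).right i)).index, 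
        𝒮 ((ℛ k a).left i * (ℛ k b).left l) * (((ℛ k ((ℛ k a).right i)).left j * (ℛ k ((ℛ k b).right l)).left m) * (𝒮 ((ℛ k ((ℛ k b).right l)).right m) * 𝒮 ((ℛ k ((ℛ k a).right i)).right j)))
      = ∑ l ∈ (ℛ k b).index, ∑ i ∈ (ℛ k a).index, ∑ j ∈ (ℛ k ((ℛ k a).right i)).index, ∑ m ∈ (ℛ k ((ℛ k b).right l)).index, 
        𝒮 ((ℛ k a).left i * (ℛ k b).left l) * (((ℛ k ((ℛ k a).right i)).left j * (ℛ k ((ℛ k b).right l)).left m) * (𝒮 ((ℛ k ((ℛ k b).right l)).right m) * 𝒮 ((ℛ k ((ℛ k a).right i)).right j))) := by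
        refine Finset.sum_congr rfl fun l _ => ?_
        rw [Finset.sum_comm]
        exact Finset.sum_congr rfl fun i _ => Finset.sum_comm
    _ = ∑ l ∈ (ℛ k b).index, ∑ i ∈ (ℛ k a).index, ∑ j ∈ (ℛ k ((ℛ k a).right i)).index, 
        𝒮 ((ℛ k a).left i * (ℛ k b).left l) * ((ℛ k ((ℛ k a).right i)).left j * ((algebraMap k A (ε ((ℛ k b).right l))) * 𝒮 ((ℛ k ((ℛ k a).right i)).right j))) := by
        refine Finset.sum_congr rfl fun l _ => Finset.sum_congr rfl fun i _ =>
          Finset.sum_congr rfl fun j _ => ?_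
        have assoc1 : ∀ m ∈ (ℛ k ((ℛ k b).right l)).index,
            𝒮 ((ℛ k a).left i * (ℛ k b).left l) * (((ℛ k ((ℛ k a).right i)).left j * (ℛ k ((ℛ k b).right l)).left m) * (𝒮 ((ℛ k ((ℛ k b).right l)).right m) * 𝒮 ((ℛ k ((ℛ k a).right i)).right j)))
            = 𝒮 ((ℛ k a).left i * (ℛ k b).left l) * ((ℛ k ((ℛ k a).right i)).left j * ((((ℛ k ((ℛ k b).right l)).left m) * 𝒮 ((ℛ k ((ℛ k b).right l)).right m)) * 𝒮 ((ℛ k ((ℛ k a).right i)).right j))) := by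
          intro m _
          rw [mul_assoc ((ℛ k ((ℛ k a).right i)).left j), ← mul_assoc ((ℛ k ((ℛ k b).right l)).left m)]
        rw [Finset.sum_congr rfl assoc1, ← Finset.mul_sum, ← Finset.mul_sum, ← Finset.sum_mul,
          sum_mul_antipode_eq_algebraMap_counit (ℛ k ((ℛ k b).right l))]
    _ = ∑ l ∈ (ℛ k b).index, ∑ i ∈ (ℛ k a).index, (ε ((ℛ k b).right l) * ε ((ℛ k a).right i)) • 𝒮 ((ℛ k a).left i * (ℛ k b).left l) := by
        refine Finset.sum_congr rfl fun l _ => Finset.sum_congr rfl fun i _ => ?_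
        have assoc2 : ∀ j ∈ (ℛ k ((ℛ k a).right i)).index,
            𝒮 ((ℛ k a).left i * (ℛ k b).left l) * ((ℛ k ((ℛ k a).right i)).left j * ((algebraMap k A (ε ((ℛ k b).right l))) * 𝒮 ((ℛ k ((ℛ k a).right i)).right j)))
            = 𝒮 ((ℛ k a).left i * (ℛ k b).left l) * ((algebraMap k A (ε ((ℛ k b).right l))) * ((ℛ k ((ℛ k a).right i)).left j * 𝒮 ((ℛ k ((ℛ k a).right i)).right j))) := by
          intro j _
          rw [← mul_assoc ((ℛ k ((ℛ k a).right i)).left j), ← Algebra.commutes, mul_assoc]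
        rw [Finset.sum_congr rfl assoc2, ← Finset.mul_sum, ← Finset.mul_sum,
          sum_mul_antipode_eq_algebraMap_counit (ℛ k ((ℛ k a).right i)), ← map_mul, ← Algebra.commutes,
          ← Algebra.smul_def]
    _ = 𝒮 (a * b) := by
        have inner : ∀ l ∈ (ℛ k b).index,
            ∑ i ∈ (ℛ k a).index, (ε ((ℛ k b).right l) * ε ((ℛ k a).right i)) • 𝒮 ((ℛ k a).left i * (ℛ k b).left l)
            = ε ((ℛ k b).right l) • 𝒮 (a * (ℛ k b).left l) := by
          intro l _
          have term : ∀ i ∈ (ℛ k a).index,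
              (ε ((ℛ k b).right l) * ε ((ℛ k a).right i)) • 𝒮 ((ℛ k a).left i * (ℛ k b).left l)
              = ε ((ℛ k b).right l) • 𝒮 ((ε ((ℛ k a).right i) • (ℛ k a).left i) * (ℛ k b).left l) := by
            intro i _
            rw [smul_mul_assoc, map_smul, mul_smul]
          rw [Finset.sum_congr rfl term, ← Finset.smul_sum, ← map_sum, ← Finset.sum_mul,
            sum_counit_smul_left a (ℛ k a)]
        rw [Finset.sum_congr rfl inner]
        have term2 : ∀ l ∈ (ℛ k b).index,
            ε ((ℛ k b).right l) • 𝒮 (a * (ℛ k b).left l) = 𝒮 (a * (ε ((ℛ k b).right l) • (ℛ k b).left l)) := by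
          intro l _
          rw [mul_smul_comm, map_smul]
        rw [Finset.sum_congr rfl term2, ← map_sum, ← Finset.mul_sum,
          sum_counit_smul_left b (ℛ k b)]

lemma Emid_eq_mul_antipode : Emid (k := k) a b = 𝒮 b * 𝒮 a := by
  unfold Emid
  calc ∑ l ∈ (ℛ k b).index, ∑ m ∈ (ℛ k ((ℛ k b).right l)).index, ∑ i ∈ (ℛ k a).index, ∑ j ∈ (ℛ k ((ℛ k a).right i)).index, 
        𝒮 ((ℛ k a).left i * (ℛ k b).left l) * (((ℛ k ((ℛ k a).right i)).left j * (ℛ k ((ℛ k b).right l)).left m) * (𝒮 ((ℛ k ((ℛ k b).right l)).right m) * 𝒮 ((ℛ k ((ℛ k a).right i)).right j)))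
      = ∑ l ∈ (ℛ k b).index, ∑ m ∈ (ℛ k ((ℛ k b).right l)).index, ∑ i ∈ (ℛ k a).index, ∑ j ∈ (ℛ k ((ℛ k a).left i)).index, 
        𝒮 ((ℛ k ((ℛ k a).left i)).left j * (ℛ k b).left l) * (((ℛ k ((ℛ k a).left i)).right j * (ℛ k ((ℛ k b).right l)).left m) * (𝒮 ((ℛ k ((ℛ k b).right l)).right m) * 𝒮 ((ℛ k a).right i))) := by
        refine Finset.sum_congr rfl fun l _ => Finset.sum_congr rfl fun m _ => ?_
        have h := tri_coassoc (𝒮 ∘ₗ LinearMap.mulRight k ((ℛ k b).left l))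
          (LinearMap.mulRight k ((ℛ k ((ℛ k b).right l)).left m))
          (LinearMap.mulLeft k (𝒮 ((ℛ k ((ℛ k b).right l)).right m)) ∘ₗ 𝒮) a (ℛ k a)
          (fun i => ℛ k ((ℛ k a).left i)) (fun i => ℛ k ((ℛ k a).right i))
        simpa only [LinearMap.coe_comp, Function.comp_apply, LinearMap.mulRight_apply,
          LinearMap.mulLeft_apply] using h.symm
    _ = ∑ l ∈ (ℛ k b).index, ∑ i ∈ (ℛ k a).index, ∑ m ∈ (ℛ k ((ℛ k b).right l)).index, ∑ j ∈ (ℛ k ((ℛ k a).left i)).index, 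
        𝒮 ((ℛ k ((ℛ k a).left i)).left j * (ℛ k b).left l) * (((ℛ k ((ℛ k a).left i)).right j * (ℛ k ((ℛ k b).right l)).left m) * (𝒮 ((ℛ k ((ℛ k b).right l)).right m) * 𝒮 ((ℛ k a).right i))) :=
        Finset.sum_congr rfl fun l _ => Finset.sum_comm
    _ = ∑ i ∈ (ℛ k a).index, ∑ l ∈ (ℛ k b).index, ∑ m ∈ (ℛ k ((ℛ k b).right l)).index, ∑ j ∈ (ℛ k ((ℛ k a).left i)).index, 
        𝒮 ((ℛ k ((ℛ k a).left i)).left j * (ℛ k b).left l) * (((ℛ k ((ℛ k a).left i)).right j * (ℛ k ((ℛ k b).right l)).left m) * (𝒮 ((ℛ k ((ℛ k b).right l)).right m) * 𝒮 ((ℛ k a).right i))) := Finset.sum_comm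
    _ = ∑ i ∈ (ℛ k a).index, ∑ l ∈ (ℛ k b).index, ∑ j ∈ (ℛ k ((ℛ k a).left i)).index, ∑ m ∈ (ℛ k ((ℛ k b).right l)).index, 
        𝒮 ((ℛ k ((ℛ k a).left i)).left j * (ℛ k b).left l) * (((ℛ k ((ℛ k a).left i)).right j * (ℛ k ((ℛ k b).right l)).left m) * (𝒮 ((ℛ k ((ℛ k b).right l)).right m) * 𝒮 ((ℛ k a).right i))) :=
        Finset.sum_congr rfl fun i _ => Finset.sum_congr rfl fun l _ => Finset.sum_comm
    _ = ∑ i ∈ (ℛ k a).index, ∑ j ∈ (ℛ k ((ℛ k a).left i)).index, ∑ l ∈ (ℛ k b).index, ∑ m ∈ (ℛ k ((ℛ k b).right l)).index, 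
        𝒮 ((ℛ k ((ℛ k a).left i)).left j * (ℛ k b).left l) * (((ℛ k ((ℛ k a).left i)).right j * (ℛ k ((ℛ k b).right l)).left m) * (𝒮 ((ℛ k ((ℛ k b).right l)).right m) * 𝒮 ((ℛ k a).right i))) :=
        Finset.sum_congr rfl fun i _ => Finset.sum_comm
    _ = ∑ i ∈ (ℛ k a).index, ∑ j ∈ (ℛ k ((ℛ k a).left i)).index, ∑ l ∈ (ℛ k b).index, ∑ m ∈ (ℛ k ((ℛ k b).left l)).index, 
        𝒮 ((ℛ k ((ℛ k a).left i)).left j * (ℛ k ((ℛ k b).left l)).left m) * (((ℛ k ((ℛ k a).left i)).right j * (ℛ k ((ℛ k b).left l)).right m) * (𝒮 ((ℛ k b).right l) * 𝒮 ((ℛ k a).right i))) := by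
        refine Finset.sum_congr rfl fun i _ => Finset.sum_congr rfl fun j _ => ?_
        have h := tri_coassoc (𝒮 ∘ₗ LinearMap.mulLeft k ((ℛ k ((ℛ k a).left i)).left j))
          (LinearMap.mulLeft k ((ℛ k ((ℛ k a).left i)).right j))
          (LinearMap.mulRight k (𝒮 ((ℛ k a).right i)) ∘ₗ 𝒮) b (ℛ k b)
          (fun l => ℛ k ((ℛ k b).left l)) (fun l => ℛ k ((ℛ k b).right l))
        simpa only [LinearMap.coe_comp, Function.comp_apply, LinearMap.mulRight_apply,
          LinearMap.mulLeft_apply] using h.symm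
    _ = ∑ i ∈ (ℛ k a).index, ∑ l ∈ (ℛ k b).index, ∑ j ∈ (ℛ k ((ℛ k a).left i)).index, ∑ m ∈ (ℛ k ((ℛ k b).left l)).index, 
        𝒮 ((ℛ k ((ℛ k a).left i)).left j * (ℛ k ((ℛ k b).left l)).left m) * (((ℛ k ((ℛ k a).left i)).right j * (ℛ k ((ℛ k b).left l)).right m) * (𝒮 ((ℛ k b).right l) * 𝒮 ((ℛ k a).right i))) :=
        Finset.sum_congr rfl fun i _ => Finset.sum_comm
    _ = ∑ i ∈ (ℛ k a).index, ∑ l ∈ (ℛ k b).index, (ε ((ℛ k a).left i) * ε ((ℛ k b).left l)) • (𝒮 ((ℛ k b).right l) * 𝒮 ((ℛ k a).right i)) := by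
        refine Finset.sum_congr rfl fun i _ => Finset.sum_congr rfl fun l _ => ?_
        have assoc3 : ∀ j ∈ (ℛ k ((ℛ k a).left i)).index, ∀ m ∈ (ℛ k ((ℛ k b).left l)).index,
            𝒮 ((ℛ k ((ℛ k a).left i)).left j * (ℛ k ((ℛ k b).left l)).left m) * (((ℛ k ((ℛ k a).left i)).right j * (ℛ k ((ℛ k b).left l)).right m) * (𝒮 ((ℛ k b).right l) * 𝒮 ((ℛ k a).right i)))
            = (𝒮 ((ℛ k ((ℛ k a).left i)).left j * (ℛ k ((ℛ k b).left l)).left m) * ((ℛ k ((ℛ k a).left i)).right j * (ℛ k ((ℛ k b).left l)).right m)) * (𝒮 ((ℛ k b).right l) * 𝒮 ((ℛ k a).right i)) := by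
          intro j _ m _
          simp only [mul_assoc]
        rw [Finset.sum_congr rfl fun j hj => Finset.sum_congr rfl (assoc3 j hj)]
        have pull : ∀ j ∈ (ℛ k ((ℛ k a).left i)).index,
            ∑ m ∈ (ℛ k ((ℛ k b).left l)).index, (𝒮 ((ℛ k ((ℛ k a).left i)).left j * (ℛ k ((ℛ k b).left l)).left m) * ((ℛ k ((ℛ k a).left i)).right j * (ℛ k ((ℛ k b).left l)).right m)) * (𝒮 ((ℛ k b).right l) * 𝒮 ((ℛ k a).right i))
            = (∑ m ∈ (ℛ k ((ℛ k b).left l)).index, 𝒮 ((ℛ k ((ℛ k a).left i)).left j * (ℛ k ((ℛ k b).left l)).left m) * ((ℛ k ((ℛ k a).left i)).right j * (ℛ k ((ℛ k b).left l)).right m)) * (𝒮 ((ℛ k b).right l) * 𝒮 ((ℛ k a).right i)) := by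
          intro j _
          rw [Finset.sum_mul]
        rw [Finset.sum_congr rfl pull, ← Finset.sum_mul]
        have key := sum_antipode_mul_eq_algebraMap_counit (R := k)
          (ReprMul (ℛ k ((ℛ k a).left i)) (ℛ k ((ℛ k b).left l)))
        have key2 : ∑ p ∈ (ℛ k ((ℛ k a).left i)).index ×ˢ (ℛ k ((ℛ k b).left l)).index,
            𝒮 ((ℛ k ((ℛ k a).left i)).left p.1 * (ℛ k ((ℛ k b).left l)).left p.2) *
              ((ℛ k ((ℛ k a).left i)).right p.1 * (ℛ k ((ℛ k b).left l)).right p.2)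
            = algebraMap k A (ε ((ℛ k a).left i * (ℛ k b).left l)) := key
        rw [Finset.sum_product] at key2
        rw [key2, Bialgebra.counit_mul, ← Algebra.smul_def]
    _ = 𝒮 b * 𝒮 a := by
        have hb : ∑ l ∈ (ℛ k b).index, ε ((ℛ k b).left l) • 𝒮 ((ℛ k b).right l) = 𝒮 b := by
          simp only [← map_smul]
          rw [← map_sum, sum_counit_smul_right b (ℛ k b)]
        have inner : ∀ i ∈ (ℛ k a).index,
            ∑ l ∈ (ℛ k b).index, (ε ((ℛ k a).left i) * ε ((ℛ k b).left l)) • (𝒮 ((ℛ k b).right l) * 𝒮 ((ℛ k a).right i))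
            = ε ((ℛ k a).left i) • (𝒮 b * 𝒮 ((ℛ k a).right i)) := by
          intro i _
          have term : ∀ l ∈ (ℛ k b).index,
              (ε ((ℛ k a).left i) * ε ((ℛ k b).left l)) • (𝒮 ((ℛ k b).right l) * 𝒮 ((ℛ k a).right i))
              = ε ((ℛ k a).left i) • ((ε ((ℛ k b).left l) • 𝒮 ((ℛ k b).right l)) * 𝒮 ((ℛ k a).right i)) := by
            intro l _
            rw [mul_smul, smul_mul_assoc]
          rw [Finset.sum_congr rfl term, ← Finset.smul_sum, ← Finset.sum_mul, hb]
        rw [Finset.sum_congr rfl inner]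
        have term2 : ∀ i ∈ (ℛ k a).index,
            ε ((ℛ k a).left i) • (𝒮 b * 𝒮 ((ℛ k a).right i)) = 𝒮 b * (ε ((ℛ k a).left i) • 𝒮 ((ℛ k a).right i)) := by
          intro i _
          rw [mul_smul_comm]
        rw [Finset.sum_congr rfl term2, ← Finset.mul_sum]
        simp only [← map_smul]
        rw [← map_sum, sum_counit_smul_right a (ℛ k a)]

/-- The antipode is an anti-homomorphism of algebras. -/
lemma antipode_antimul : 𝒮 (a * b) = 𝒮 b * 𝒮 a := by
  rw [← Emid_eq_antipode_mul a b, Emid_eq_mul_antipode a b]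

end AntipodeMul

end Integral

section Main

variable (Λ : A)

lemma P_central (hL : ∀ a : A, a * Λ = ε a • Λ) (hR : ∀ a : A, Λ * a = ε a • Λ)
    (n : ℕ) (a : A) : a * P n Λ = P n Λ * a := by
  cases n with
  | zero =>
    rw [P_zero]
    exact (Algebra.commutes _ _).symm
  | succ m =>
    exact central_of_S_comm (P (m+1) Λ) (fun b => P_comm_S Λ hL hR m b) a

lemma S_central (z : A) (hz : ∀ c : A, c * z = z * c) (a : A) :
    a * 𝒮 z = 𝒮 z * a := by
  refine central_of_S_comm (k := k) (𝒮 z) (fun c => ?_) a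
  calc 𝒮 z * 𝒮 c = 𝒮 (c * z) := (antipode_antimul c z).symm
    _ = 𝒮 (z * c) := by rw [hz c]
    _ = 𝒮 c * 𝒮 z := antipode_antimul z c

lemma SQ_central (hL : ∀ a : A, a * Λ = ε a • Λ) (hR : ∀ a : A, Λ * a = ε a • Λ)
    (m : ℕ) (a : A) : a * 𝒮 (Q (m+1) Λ) = 𝒮 (Q (m+1) Λ) * a :=
  S_central (Q (m+1) Λ) (fun c => Q_central Λ hL hR m c) a

end Main

end AuxProof

/-- Let `A` be a finite-dimensional unimodular Hopf algebra over a field `k`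
(i.e. the distinguished group-like element attached to a nonzero left integral `Λ` is the
counit) with a nonzero left integral `Λ`. Then for every `n ∈ ℤ` the element `Pₙ(Λ)` is
central in `A`. -/
theorem sweedler_power_integral_central_of_unimodular
    (k : Type*) [Field k] (A : Type*) [Ring A] [HopfAlgebra k A] [FiniteDimensional k A]
    (Λ : A) (hΛ : Λ ≠ 0) (hint : IsLeftIntegral k A Λ)
    (hunimod : IsDistinguished k A Λ (Coalgebra.counit (R := k)))
    (n : ℤ) (a : A) :
    a * SweedlerP k A n Λ = SweedlerP k A n Λ * a := by
  have hL : ∀ b : A, b * Λ = Coalgebra.counit (R := k) b • Λ := hint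
  have hR : ∀ b : A, Λ * b = Coalgebra.counit (R := k) b • Λ := hunimod
  unfold SweedlerP PGen
  split_ifs with h
  · exact P_central Λ hL hR n.toNat a
  · have hm : ∃ m : ℕ, (-n).toNat = m + 1 := ⟨(-n).toNat - 1, by omega⟩
    obtain ⟨m, hm⟩ := hm
    rw [hm]
    simp only [LinearMap.coe_comp, Function.comp_apply]
    exact SQ_central Λ hL hR m a
end

section
/- Let A be a finite-dimensional Hopf algebra over a field k with a right integral λ ∈ A* and a left integral Λ ∈ A normalized so that λ(Λ) = 1. Then for every n ∈ ℤ the n-th indicator of A satisfies ν_n(A) = λ(S(P_n(Λ))), where ν_n(A) = tr(S ∘ P_{n-1}). -/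
open TensorProduct

noncomputable section

variable (k : Type*) [Field k] (A : Type*) [Ring A] [HopfAlgebra k A]

/-- A normalized twist `J` for the Hopf algebra `A`: an invertible element of `A ⊗ A`
(with specified inverse) satisfying `(ε ⊗ id)(J) = (id ⊗ ε)(J) = 1` and the cocycle
condition `(Δ ⊗ id)(J)(J ⊗ 1) = (id ⊗ Δ)(J)(1 ⊗ J)`. -/
structure NormalizedTwist where
  J : A ⊗[k] A
  Jinv : A ⊗[k] A
  mul_inv : J * Jinv = 1
  inv_mul : Jinv * J = 1
  counit_id : (TensorProduct.lid k A) ((TensorProduct.map Coalgebra.counit LinearMap.id) J) = 1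
  id_counit : (TensorProduct.rid k A) ((TensorProduct.map LinearMap.id Coalgebra.counit) J) = 1
  cocycle : (Algebra.TensorProduct.assoc k k k A A A)
      ((TensorProduct.map Coalgebra.comul LinearMap.id) J * (J ⊗ₜ[k] (1 : A)))
    = (TensorProduct.map LinearMap.id Coalgebra.comul) J * ((1 : A) ⊗ₜ[k] J)

variable {k A} (t : NormalizedTwist k A)

/-- `Q_J = S(J⁽¹⁾) J⁽²⁾`. -/
def NormalizedTwist.QJ : A :=
  LinearMap.mul' k A ((TensorProduct.map (HopfAlgebra.antipode (R := k)) LinearMap.id) t.J)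

/-- `Q_J⁻¹ = J⁻⁽¹⁾ S(J⁻⁽²⁾)`. -/
def NormalizedTwist.QJinv : A :=
  LinearMap.mul' k A ((TensorProduct.map LinearMap.id (HopfAlgebra.antipode (R := k))) t.Jinv)

/-- The twisted comultiplication `Δᴶ(a) = J⁻¹ Δ(a) J`. -/
def NormalizedTwist.comulJ : A →ₗ[k] A ⊗[k] A :=
  LinearMap.mulLeft k t.Jinv ∘ₗ LinearMap.mulRight k t.J ∘ₗ Coalgebra.comul

/-- The twisted antipode `Sᴶ(a) = Q_J⁻¹ S(a) Q_J`. -/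
def NormalizedTwist.SJ : A →ₗ[k] A :=
  LinearMap.mulLeft k t.QJinv ∘ₗ LinearMap.mulRight k t.QJ ∘ₗ HopfAlgebra.antipode (R := k)

/-- The `n`-th Sweedler power map of the twisted Hopf algebra `A^J`. -/
def NormalizedTwist.PJ (n : ℤ) : A →ₗ[k] A := PGen k A t.comulJ t.SJ n

/-- `T = J⁻⁽¹⁾ α(J⁻⁽²⁾)`. -/
def NormalizedTwist.Telt (α : A →ₗ[k] k) : A :=
  (TensorProduct.rid k A) ((TensorProduct.map LinearMap.id α) t.Jinv)

/-- `R = α(J⁻⁽¹⁾) J⁻⁽²⁾`. -/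
def NormalizedTwist.Relt (α : A →ₗ[k] k) : A :=
  (TensorProduct.lid k A) ((TensorProduct.map α LinearMap.id) t.Jinv)

/-- `R⁻¹ = α(J⁽¹⁾) J⁽²⁾`. -/
def NormalizedTwist.Rinv (α : A →ₗ[k] k) : A :=
  (TensorProduct.lid k A) ((TensorProduct.map α LinearMap.id) t.J)

end

noncomputable section

variable (k : Type*) [Field k] (A : Type*) [Ring A] [HopfAlgebra k A]

/-- `lam ∈ A*` is a right integral with respect to the comultiplication-like map `D`:
`λ(a₍₁₎) a₍₂₎ = λ(a) 1` for all `a`. -/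
def IsRightIntegralOn (D : A →ₗ[k] A ⊗[k] A) (lam : A →ₗ[k] k) : Prop :=
  ∀ a : A, TensorProduct.lid k A (TensorProduct.map lam LinearMap.id (D a)) = lam a • (1 : A)

/-- The `n`-th indicator `ν_n(A) = tr(S ∘ P_{n-1})` of the Hopf algebra `A`. -/
def indicator (n : ℤ) : k :=
  LinearMap.trace k A (HopfAlgebra.antipode (R := k) ∘ₗ SweedlerP k A (n - 1))

end

noncomputable section AuxHopf
open Coalgebra
variable {k : Type*} [Field k] {A : Type*} [Ring A] [HopfAlgebra k A]

local notation "S°" => HopfAlgebra.antipode (R := k) (A := A)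

lemma sum_counit_smul {ι : Type*} (a : A) (r : Repr k a ι) :
    ∑ i ∈ r.index, counit (R := k) (r.left i) • r.right i = a := by
  have := congrArg (TensorProduct.lid k A) (sum_counit_tmul_eq r)
  simp only [map_sum, lid_tmul, one_smul] at this
  exact this

lemma sum_smul_counit {ι : Type*} (a : A) (r : Repr k a ι) :
    ∑ i ∈ r.index, counit (R := k) (r.right i) • r.left i = a := by
  have := congrArg (TensorProduct.rid k A) (sum_tmul_counit_eq r)
  simp only [map_sum, rid_tmul, one_smul] at this
  exact this

def mulRepr {ι κ : Type*} (a b : A) (ra : Repr k a ι) (rb : Repr k b κ) : Repr k (a * b) (ι × κ) where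
  index := ra.index ×ˢ rb.index
  left := fun p => ra.left p.1 * rb.left p.2
  right := fun p => ra.right p.1 * rb.right p.2
  eq := by
    rw [Bialgebra.comul_mul, ← ra.eq, ← rb.eq, Finset.sum_mul_sum, Finset.sum_product]
    simp [Algebra.TensorProduct.tmul_mul_tmul]

lemma coassoc_sum {M : Type*} [AddCommMonoid M] [Module k M]
    {ι : Type*} {κ1 κ2 : ι → Type*}
    (a : A) (r : Repr k a ι) (l : ∀ i, Repr k (r.left i) (κ1 i))
    (rr : ∀ i, Repr k (r.right i) (κ2 i))
    (G : A ⊗[k] (A ⊗[k] A) →ₗ[k] M) :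
    ∑ i ∈ r.index, ∑ p ∈ (l i).index,
        G ((l i).left p ⊗ₜ[k] ((l i).right p ⊗ₜ[k] r.right i))
      = ∑ i ∈ r.index, ∑ p ∈ (rr i).index,
        G (r.left i ⊗ₜ[k] ((rr i).left p ⊗ₜ[k] (rr i).right p)) := by
  have := congrArg G (sum_tmul_tmul_eq r l rr)
  simpa [map_sum] using this

lemma antipode_one : S° (1 : A) = 1 := by
  have h := HopfAlgebra.mul_antipode_rTensor_comul_apply (R := k) (A := A) 1
  rw [show (comul (R := k) (1 : A)) = 1 ⊗ₜ[k] 1 by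
        simpa [Algebra.TensorProduct.one_def] using Bialgebra.comul_one k A] at h
  simpa using h

def trilin (f g h : A →ₗ[k] A) : A ⊗[k] (A ⊗[k] A) →ₗ[k] A :=
  (LinearMap.mul' k A ∘ₗ LinearMap.lTensor A (LinearMap.mul' k A)) ∘ₗ map f (map g h)

@[simp] lemma trilin_tmul (f g h : A →ₗ[k] A) (x y z : A) :
    trilin f g h (x ⊗ₜ[k] (y ⊗ₜ[k] z)) = f x * (g y * h z) := by
  simp [trilin]


def trilinR (f g h : A →ₗ[k] A) : A ⊗[k] (A ⊗[k] A) →ₗ[k] A :=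
  (LinearMap.mul' k A ∘ₗ LinearMap.rTensor A (LinearMap.mul' k A)
    ∘ₗ (TensorProduct.comm k A (A ⊗[k] A)).toLinearMap
    ∘ₗ LinearMap.lTensor A (TensorProduct.comm k A A).toLinearMap) ∘ₗ map f (map g h)

@[simp] lemma trilinR_tmul (f g h : A →ₗ[k] A) (x y z : A) :
    trilinR f g h (x ⊗ₜ[k] (y ⊗ₜ[k] z)) = h z * g y * f x := by
  simp [trilinR]


def scal3 (φ : A →ₗ[k] k) (g h : A →ₗ[k] A) : A ⊗[k] (A ⊗[k] A) →ₗ[k] A :=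
  (LinearMap.mul' k A ∘ₗ (TensorProduct.lid k (A ⊗[k] A)).toLinearMap) ∘ₗ map φ (map g h)

@[simp] lemma scal3_tmul (φ : A →ₗ[k] k) (g h : A →ₗ[k] A) (x y z : A) :
    scal3 φ g h (x ⊗ₜ[k] (y ⊗ₜ[k] z)) = φ x • (g y * h z) := by
  simp [scal3]

/-- convolution of two endomorphisms -/
def cnv (f g : A →ₗ[k] A) : A →ₗ[k] A :=
  LinearMap.mul' k A ∘ₗ map f g ∘ₗ Coalgebra.comul

/-- reversed convolution -/
def cnvR (f g : A →ₗ[k] A) : A →ₗ[k] A :=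
  LinearMap.mul' k A ∘ₗ (TensorProduct.comm k A A).toLinearMap ∘ₗ map f g ∘ₗ Coalgebra.comul

lemma cnv_repr {ι : Type*} (f g : A →ₗ[k] A) (a : A) (r : Repr k a ι) :
    cnv f g a = ∑ i ∈ r.index, f (r.left i) * g (r.right i) := by
  simp only [cnv, LinearMap.comp_apply]
  rw [← r.eq]
  simp

lemma cnvR_repr {ι : Type*} (f g : A →ₗ[k] A) (a : A) (r : Repr k a ι) :
    cnvR f g a = ∑ i ∈ r.index, g (r.right i) * f (r.left i) := by
  simp only [cnvR, LinearMap.comp_apply]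
  rw [← r.eq]
  simp

lemma conv1 {ι κ : Type*} (a b : A) (ra : Repr k a ι) (rb : Repr k b κ) :
    ∑ i ∈ ra.index, ∑ j ∈ rb.index,
      S° (ra.left i * rb.left j) * (ra.right i * rb.right j)
    = (counit (R := k) a * counit (R := k) b) • (1 : A) := by
  have h := HopfAlgebra.sum_antipode_mul_eq_smul (R := k) (mulRepr a b ra rb)
  rw [Bialgebra.counit_mul] at h
  rw [← h]
  simp only [mulRepr]
  rw [Finset.sum_product]

lemma conv2 {ι κ : Type*} (a b : A) (ra : Repr k a ι) (rb : Repr k b κ) :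
    ∑ i ∈ ra.index, ∑ j ∈ rb.index,
      (ra.left i * rb.left j) * (S° (rb.right j) * S° (ra.right i))
    = (counit (R := k) a * counit (R := k) b) • (1 : A) := by
  have key : ∀ i, ∑ j ∈ rb.index,
      (ra.left i * rb.left j) * (S° (rb.right j) * S° (ra.right i))
      = counit (R := k) b • (ra.left i * S° (ra.right i)) := by
    intro i
    calc ∑ j ∈ rb.index, (ra.left i * rb.left j) * (S° (rb.right j) * S° (ra.right i))
        = ra.left i * ((∑ j ∈ rb.index, rb.left j * S° (rb.right j)) * S° (ra.right i)) := by
          simp only [Finset.sum_mul, Finset.mul_sum, mul_assoc]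
      _ = counit (R := k) b • (ra.left i * S° (ra.right i)) := by
          rw [HopfAlgebra.sum_mul_antipode_eq_smul rb]
          simp [smul_mul_assoc, mul_smul_comm]
  rw [Finset.sum_congr rfl (fun i _ => key i), ← Finset.smul_sum,
    HopfAlgebra.sum_mul_antipode_eq_smul ra, smul_smul, mul_comm]

lemma antipode_mul (a b : A) : S° (a * b) = S° b * S° a := by
  symm
  set ra := ℛ k a with hra
  set rb := ℛ k b with hrb
  set la : ∀ i, Repr k (ra.left i) (A × A) := fun i => ℛ k (ra.left i) with hla
  set ras : ∀ i, Repr k (ra.right i) (A × A) := fun i => ℛ k (ra.right i) with hras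
  set lb : ∀ j, Repr k (rb.left j) (A × A) := fun j => ℛ k (rb.left j) with hlb
  set rbs : ∀ j, Repr k (rb.right j) (A × A) := fun j => ℛ k (rb.right j) with hrbs
  set G : (Σ j : rb.ι, (lb j).ι) → (A ⊗[k] (A ⊗[k] A) →ₗ[k] A) := fun σ =>
    trilin (S° ∘ₗ LinearMap.mulRight k ((lb σ.1).left σ.2))
      (LinearMap.mulRight k ((lb σ.1).right σ.2))
      (LinearMap.mulLeft k (S° (rb.right σ.1)) ∘ₗ S°) with hGdef
  have hGapp : ∀ u v w : A,
      (∑ σ ∈ rb.index.sigma fun j => (lb j).index, G σ) (u ⊗ₜ[k] (v ⊗ₜ[k] w))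
      = ∑ j ∈ rb.index, ∑ q ∈ (lb j).index,
          S° (u * (lb j).left q) * ((v * (lb j).right q) * (S° (rb.right j) * S° w)) := by
    intro u v w
    rw [LinearMap.sum_apply, Finset.sum_sigma]
    simp [hGdef]
  have hSa : S° a = ∑ i ∈ ra.index, counit (R := k) (ra.left i) • S° (ra.right i) := by
    conv_lhs => rw [← sum_counit_smul a ra]
    simp [map_sum]
  have hSb : S° b = ∑ j ∈ rb.index, counit (R := k) (rb.left j) • S° (rb.right j) := by
    conv_lhs => rw [← sum_counit_smul b rb]
    simp [map_sum]
  calc S° b * S° a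
      = ∑ i ∈ ra.index, ∑ j ∈ rb.index,
          (counit (R := k) (ra.left i) * counit (R := k) (rb.left j)) •
            (S° (rb.right j) * S° (ra.right i)) := by
        rw [hSa, hSb, Finset.sum_mul_sum, Finset.sum_comm]
        refine Finset.sum_congr rfl fun i _ => Finset.sum_congr rfl fun j _ => ?_
        simp [smul_mul_assoc, mul_smul_comm, smul_smul, mul_comm]
    _ = ∑ i ∈ ra.index, ∑ j ∈ rb.index, ∑ p ∈ (la i).index, ∑ q ∈ (lb j).index,
          S° ((la i).left p * (lb j).left q) *
            (((la i).right p * (lb j).right q) * (S° (rb.right j) * S° (ra.right i))) := by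
        refine Finset.sum_congr rfl fun i _ => Finset.sum_congr rfl fun j _ => ?_
        rw [show ((counit (R := k) (ra.left i) * counit (R := k) (rb.left j)) •
              (S° (rb.right j) * S° (ra.right i)))
            = (∑ p ∈ (la i).index, ∑ q ∈ (lb j).index,
                S° ((la i).left p * (lb j).left q) * ((la i).right p * (lb j).right q)) *
                (S° (rb.right j) * S° (ra.right i)) by
          rw [conv1 _ _ (la i) (lb j)]; simp [smul_mul_assoc]]
        simp only [Finset.sum_mul, mul_assoc]
    _ = ∑ i ∈ ra.index, ∑ p ∈ (la i).index,
          (∑ σ ∈ rb.index.sigma fun j => (lb j).index, G σ)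
            ((la i).left p ⊗ₜ[k] ((la i).right p ⊗ₜ[k] ra.right i)) := by
        refine Finset.sum_congr rfl fun i _ => ?_
        rw [Finset.sum_comm]
        refine Finset.sum_congr rfl fun p _ => ?_
        rw [hGapp]
    _ = ∑ i ∈ ra.index, ∑ p ∈ (ras i).index,
          (∑ σ ∈ rb.index.sigma fun j => (lb j).index, G σ)
            (ra.left i ⊗ₜ[k] ((ras i).left p ⊗ₜ[k] (ras i).right p)) :=
        coassoc_sum a ra la ras _
    _ = ∑ i ∈ ra.index, ∑ p ∈ (ras i).index, ∑ j ∈ rb.index, ∑ q ∈ (lb j).index,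
          S° (ra.left i * (lb j).left q) *
            (((ras i).left p * (lb j).right q) * (S° (rb.right j) * S° ((ras i).right p))) := by
        refine Finset.sum_congr rfl fun i _ => Finset.sum_congr rfl fun p _ => ?_
        rw [hGapp]
    _ = ∑ i ∈ ra.index, ∑ p ∈ (ras i).index, ∑ j ∈ rb.index, ∑ q ∈ (rbs j).index,
          S° (ra.left i * rb.left j) *
            (((ras i).left p * (rbs j).left q) *
              (S° ((rbs j).right q) * S° ((ras i).right p))) := by
        refine Finset.sum_congr rfl fun i _ => Finset.sum_congr rfl fun p _ => ?_
        have hc := coassoc_sum b rb lb rbs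
          (trilin (S° ∘ₗ LinearMap.mulLeft k (ra.left i))
            (LinearMap.mulLeft k ((ras i).left p))
            (LinearMap.mulRight k (S° ((ras i).right p)) ∘ₗ S°))
        simpa using hc
    _ = ∑ i ∈ ra.index, ∑ p ∈ (ras i).index, ∑ j ∈ rb.index,
          counit (R := k) (rb.right j) •
            (S° (ra.left i * rb.left j) * ((ras i).left p * S° ((ras i).right p))) := by
        refine Finset.sum_congr rfl fun i _ => Finset.sum_congr rfl fun p _ =>
          Finset.sum_congr rfl fun j _ => ?_
        rw [show (∑ q ∈ (rbs j).index, S° (ra.left i * rb.left j) *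
              (((ras i).left p * (rbs j).left q) *
                (S° ((rbs j).right q) * S° ((ras i).right p))))
            = S° (ra.left i * rb.left j) * ((ras i).left p *
                ((∑ q ∈ (rbs j).index, (rbs j).left q * S° ((rbs j).right q)) *
                  S° ((ras i).right p))) by
          simp only [Finset.mul_sum, Finset.sum_mul, mul_assoc]]
        rw [HopfAlgebra.sum_mul_antipode_eq_smul (rbs j)]
        simp [smul_mul_assoc, mul_smul_comm]
    _ = ∑ i ∈ ra.index, ∑ j ∈ rb.index,
          (counit (R := k) (ra.right i) * counit (R := k) (rb.right j)) •
            S° (ra.left i * rb.left j) := by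
        refine Finset.sum_congr rfl fun i _ => ?_
        rw [Finset.sum_comm]
        refine Finset.sum_congr rfl fun j _ => ?_
        rw [← Finset.smul_sum, ← Finset.mul_sum,
          HopfAlgebra.sum_mul_antipode_eq_smul (ras i)]
        simp only [mul_smul_comm, smul_smul, mul_one]
        congr 1
        ring
    _ = S° (a * b) := by
        rw [show a * b = (∑ i ∈ ra.index, counit (R := k) (ra.right i) • ra.left i) *
              (∑ j ∈ rb.index, counit (R := k) (rb.right j) • rb.left j) by
            rw [sum_smul_counit a ra, sum_smul_counit b rb]]
        rw [Finset.sum_mul_sum, map_sum]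
        refine Finset.sum_congr rfl fun i _ => ?_
        rw [map_sum]
        refine Finset.sum_congr rfl fun j _ => ?_
        rw [smul_mul_assoc, mul_smul_comm, map_smul, map_smul, smul_smul]


end AuxHopf

noncomputable section PowerLemmas
open Coalgebra
variable {k : Type*} [Field k] {A : Type*} [Ring A] [HopfAlgebra k A]

lemma Ppos_zero_apply (a : A) :
    PposGen k A Coalgebra.comul 0 a = counit (R := k) a • 1 := by
  simp [PposGen, Algebra.algebraMap_eq_smul_one]

lemma Ppos_succ_apply {ι : Type*} (n : ℕ) (a : A) (r : Repr k a ι) :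
    PposGen k A Coalgebra.comul (n+1) a
      = ∑ i ∈ r.index, r.left i * PposGen k A Coalgebra.comul n (r.right i) := by
  simp only [PposGen, LinearMap.comp_apply]
  rw [← r.eq]
  simp

lemma Qpos_zero_apply (a : A) :
    QposGen k A Coalgebra.comul 0 a = counit (R := k) a • 1 := by
  simp [QposGen, Algebra.algebraMap_eq_smul_one]

lemma Qpos_succ_apply {ι : Type*} (n : ℕ) (a : A) (r : Repr k a ι) :
    QposGen k A Coalgebra.comul (n+1) a
      = ∑ i ∈ r.index, QposGen k A Coalgebra.comul n (r.right i) * r.left i := by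
  simp only [QposGen, LinearMap.comp_apply]
  rw [← r.eq]
  simp

lemma Ppos_pred (n : ℕ) : ∀ (a : A),
    cnv (PposGen k A Coalgebra.comul n) LinearMap.id a
      = PposGen k A Coalgebra.comul (n+1) a := by
  induction n with
  | zero =>
    intro a
    rw [cnv_repr _ _ a (ℛ k a), Ppos_succ_apply 0 a (ℛ k a)]
    simp only [Ppos_zero_apply, smul_mul_assoc, one_mul, mul_smul_comm, mul_one,
      LinearMap.id_coe, id_eq]
    rw [sum_counit_smul a (ℛ k a), sum_smul_counit a (ℛ k a)]
  | succ n ih =>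
    intro a
    set r := ℛ k a with hr
    set l : ∀ i, Repr k (r.left i) (A × A) := fun i => ℛ k (r.left i) with hl
    set rr : ∀ i, Repr k (r.right i) (A × A) := fun i => ℛ k (r.right i) with hrr
    calc cnv (PposGen k A Coalgebra.comul (n+1)) LinearMap.id a
        = ∑ i ∈ r.index, PposGen k A Coalgebra.comul (n+1) (r.left i) * r.right i := by
          rw [cnv_repr _ _ a r]; rfl
      _ = ∑ i ∈ r.index, ∑ p ∈ (l i).index,
            (l i).left p * (PposGen k A Coalgebra.comul n ((l i).right p) * r.right i) := by
          refine Finset.sum_congr rfl fun i _ => ?_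
          rw [Ppos_succ_apply n (r.left i) (l i), Finset.sum_mul]
          simp only [mul_assoc]
      _ = ∑ i ∈ r.index, ∑ p ∈ (rr i).index,
            r.left i * (PposGen k A Coalgebra.comul n ((rr i).left p) * (rr i).right p) := by
          have hc := coassoc_sum a r l rr
            (trilin LinearMap.id (PposGen k A Coalgebra.comul n) LinearMap.id)
          simpa using hc
      _ = ∑ i ∈ r.index, r.left i * PposGen k A Coalgebra.comul (n+1) (r.right i) := by
          refine Finset.sum_congr rfl fun i _ => ?_
          rw [← Finset.mul_sum]
          congr 1
          rw [← ih (r.right i), cnv_repr _ _ _ (rr i)]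
          rfl
      _ = PposGen k A Coalgebra.comul (n+2) a := (Ppos_succ_apply (n+1) a r).symm

lemma Qpos_pred (n : ℕ) : ∀ (a : A),
    cnvR (QposGen k A Coalgebra.comul n) LinearMap.id a
      = QposGen k A Coalgebra.comul (n+1) a := by
  induction n with
  | zero =>
    intro a
    rw [cnvR_repr _ _ a (ℛ k a), Qpos_succ_apply 0 a (ℛ k a)]
    simp only [Qpos_zero_apply, smul_mul_assoc, one_mul, mul_smul_comm, mul_one,
      LinearMap.id_coe, id_eq]
    rw [sum_smul_counit a (ℛ k a), sum_counit_smul a (ℛ k a)]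
  | succ n ih =>
    intro a
    set r := ℛ k a with hr
    set l : ∀ i, Repr k (r.left i) (A × A) := fun i => ℛ k (r.left i) with hl
    set rr : ∀ i, Repr k (r.right i) (A × A) := fun i => ℛ k (r.right i) with hrr
    calc cnvR (QposGen k A Coalgebra.comul (n+1)) LinearMap.id a
        = ∑ i ∈ r.index, r.right i * QposGen k A Coalgebra.comul (n+1) (r.left i) := by
          rw [cnvR_repr _ _ a r]; rfl
      _ = ∑ i ∈ r.index, ∑ p ∈ (l i).index,
            r.right i * QposGen k A Coalgebra.comul n ((l i).right p) * (l i).left p := by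
          refine Finset.sum_congr rfl fun i _ => ?_
          rw [Qpos_succ_apply n (r.left i) (l i), Finset.mul_sum]
          simp only [mul_assoc]
      _ = ∑ i ∈ r.index, ∑ p ∈ (rr i).index,
            (rr i).right p * QposGen k A Coalgebra.comul n ((rr i).left p) * r.left i := by
          have hc := coassoc_sum a r l rr
            (trilinR LinearMap.id (QposGen k A Coalgebra.comul n) LinearMap.id)
          simpa using hc
      _ = ∑ i ∈ r.index, QposGen k A Coalgebra.comul (n+1) (r.right i) * r.left i := by
          refine Finset.sum_congr rfl fun i _ => ?_
          rw [← Finset.sum_mul]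
          congr 1
          rw [← ih (r.right i), cnvR_repr _ _ _ (rr i)]
          rfl
      _ = QposGen k A Coalgebra.comul (n+2) a := (Qpos_succ_apply (n+1) a r).symm

lemma SQ_step {ι : Type*} (n : ℕ) (a : A) (r : Repr k a ι) :
    ∑ i ∈ r.index,
        HopfAlgebra.antipode (R := k) (QposGen k A Coalgebra.comul (n+1) (r.left i)) * r.right i
      = HopfAlgebra.antipode (R := k) (QposGen k A Coalgebra.comul n a) := by
  set l : ∀ i, Repr k (r.left i) (A × A) := fun i => ℛ k (r.left i) with hl
  set rr : ∀ i, Repr k (r.right i) (A × A) := fun i => ℛ k (r.right i) with hrr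
  calc ∑ i ∈ r.index,
        HopfAlgebra.antipode (R := k) (QposGen k A Coalgebra.comul (n+1) (r.left i)) * r.right i
      = ∑ i ∈ r.index, ∑ p ∈ (l i).index,
          HopfAlgebra.antipode (R := k) (QposGen k A Coalgebra.comul n ((l i).left p)) *
            (HopfAlgebra.antipode (R := k) ((l i).right p) * r.right i) := by
        refine Finset.sum_congr rfl fun i _ => ?_
        rw [← Qpos_pred n (r.left i), cnvR_repr _ _ _ (l i), map_sum, Finset.sum_mul]
        refine Finset.sum_congr rfl fun p _ => ?_
        simp only [LinearMap.id_coe, id_eq]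
        rw [antipode_mul, mul_assoc]
    _ = ∑ i ∈ r.index, ∑ p ∈ (rr i).index,
          HopfAlgebra.antipode (R := k) (QposGen k A Coalgebra.comul n (r.left i)) *
            (HopfAlgebra.antipode (R := k) ((rr i).left p) * (rr i).right p) := by
        have hc := coassoc_sum a r l rr
          (trilin (HopfAlgebra.antipode (R := k) ∘ₗ QposGen k A Coalgebra.comul n)
            (HopfAlgebra.antipode (R := k)) LinearMap.id)
        simpa using hc
    _ = ∑ i ∈ r.index, counit (R := k) (r.right i) •
          HopfAlgebra.antipode (R := k) (QposGen k A Coalgebra.comul n (r.left i)) := by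
        refine Finset.sum_congr rfl fun i _ => ?_
        rw [← Finset.mul_sum, HopfAlgebra.sum_antipode_mul_eq_smul (rr i)]
        simp [mul_smul_comm]
    _ = HopfAlgebra.antipode (R := k) (QposGen k A Coalgebra.comul n a) := by
        rw [show (∑ i ∈ r.index, counit (R := k) (r.right i) •
              HopfAlgebra.antipode (R := k) (QposGen k A Coalgebra.comul n (r.left i)))
            = HopfAlgebra.antipode (R := k) (QposGen k A Coalgebra.comul n
                (∑ i ∈ r.index, counit (R := k) (r.right i) • r.left i)) by
            simp [map_sum]]
        rw [sum_smul_counit a r]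

end PowerLemmas


noncomputable section IntegralLemmas
open Coalgebra
variable {k : Type*} [Field k] {A : Type*} [Ring A] [HopfAlgebra k A]

local notation "S°" => HopfAlgebra.antipode (R := k) (A := A)

variable (lam : A →ₗ[k] k)

lemma hri_repr (hri : IsRightIntegralOn k A (Coalgebra.comul (R := k)) lam)
    {ι : Type*} (c : A) (r : Repr k c ι) :
    ∑ i ∈ r.index, lam (r.left i) • r.right i = lam c • (1 : A) := by
  have h := hri c
  rw [← r.eq] at h
  simpa [map_sum] using h

lemma L1two (hri : IsRightIntegralOn k A (Coalgebra.comul (R := k)) lam)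
    {ι κ : Type*} (a b : A) (ra : Repr k a ι) (rb : Repr k b κ) :
    ∑ j ∈ rb.index, ∑ i ∈ ra.index,
        lam (ra.left i * rb.left j) • (ra.right i * rb.right j)
      = lam (a * b) • (1 : A) := by
  have h := hri_repr lam hri (a * b) (mulRepr a b ra rb)
  simp only [mulRepr] at h
  rw [Finset.sum_product] at h
  rw [← h]
  exact Finset.sum_comm

variable (Λ : A)

lemma dual_basis_L2 (hri : IsRightIntegralOn k A (Coalgebra.comul (R := k)) lam)
    (hint : IsLeftIntegral k A Λ) (hnorm : lam Λ = 1) {ι : Type*} (rL : Repr k Λ ι) (x : A) :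
    ∑ j ∈ rL.index, lam (x * rL.left j) • S° (rL.right j) = x := by
  set rx := ℛ k x with hrx
  set lL : ∀ j, Repr k (rL.left j) (A × A) := fun j => ℛ k (rL.left j) with hlL
  set rrL : ∀ j, Repr k (rL.right j) (A × A) := fun j => ℛ k (rL.right j) with hrrL
  set G : A ⊗[k] (A ⊗[k] A) →ₗ[k] A :=
    ∑ i ∈ rx.index, scal3 (lam ∘ₗ LinearMap.mulLeft k (rx.left i))
      (LinearMap.mulLeft k (rx.right i)) S° with hGdef
  have hGapp : ∀ u v w : A, G (u ⊗ₜ[k] (v ⊗ₜ[k] w))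
      = ∑ i ∈ rx.index, lam (rx.left i * u) • (rx.right i * v * S° w) := by
    intro u v w
    rw [hGdef, LinearMap.sum_apply]
    simp
  calc ∑ j ∈ rL.index, lam (x * rL.left j) • S° (rL.right j)
      = ∑ j ∈ rL.index, ∑ p ∈ (lL j).index, ∑ i ∈ rx.index,
          lam (rx.left i * (lL j).left p) •
            (rx.right i * (lL j).right p * S° (rL.right j)) := by
        refine Finset.sum_congr rfl fun j _ => ?_
        rw [show (lam (x * rL.left j) • S° (rL.right j))
            = (lam (x * rL.left j) • (1 : A)) * S° (rL.right j) by
          simp [smul_mul_assoc]]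
        rw [← L1two lam hri x (rL.left j) rx (lL j), Finset.sum_mul]
        refine Finset.sum_congr rfl fun p _ => ?_
        rw [Finset.sum_mul]
        refine Finset.sum_congr rfl fun i _ => ?_
        rw [smul_mul_assoc]
    _ = ∑ j ∈ rL.index, ∑ p ∈ (lL j).index,
          G ((lL j).left p ⊗ₜ[k] ((lL j).right p ⊗ₜ[k] rL.right j)) := by
        refine Finset.sum_congr rfl fun j _ => Finset.sum_congr rfl fun p _ => ?_
        rw [hGapp]
    _ = ∑ j ∈ rL.index, ∑ p ∈ (rrL j).index,
          G (rL.left j ⊗ₜ[k] ((rrL j).left p ⊗ₜ[k] (rrL j).right p)) :=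
        coassoc_sum Λ rL lL rrL G
    _ = ∑ j ∈ rL.index, ∑ i ∈ rx.index,
          lam (rx.left i * rL.left j) •
            (rx.right i * (counit (R := k) (rL.right j) • (1 : A))) := by
        refine Finset.sum_congr rfl fun j _ => ?_
        rw [show (∑ p ∈ (rrL j).index,
              G (rL.left j ⊗ₜ[k] ((rrL j).left p ⊗ₜ[k] (rrL j).right p)))
            = ∑ i ∈ rx.index, ∑ p ∈ (rrL j).index, lam (rx.left i * rL.left j) •
                (rx.right i * ((rrL j).left p * S° ((rrL j).right p))) by
          rw [Finset.sum_comm]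
          refine Finset.sum_congr rfl fun p _ => ?_
          rw [hGapp]
          simp [mul_assoc]]
        refine Finset.sum_congr rfl fun i _ => ?_
        rw [← Finset.smul_sum, ← Finset.mul_sum,
          HopfAlgebra.sum_mul_antipode_eq_smul (rrL j)]
    _ = ∑ i ∈ rx.index, lam (rx.left i * Λ) • rx.right i := by
        rw [Finset.sum_comm]
        refine Finset.sum_congr rfl fun i _ => ?_
        have h1 : ∀ j ∈ rL.index, lam (rx.left i * rL.left j) •
              (rx.right i * (counit (R := k) (rL.right j) • (1 : A)))
            = (counit (R := k) (rL.right j) * lam (rx.left i * rL.left j)) • rx.right i := by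
          intro j _
          rw [mul_smul_comm, mul_one, smul_smul, mul_comm]
        rw [Finset.sum_congr rfl h1, ← Finset.sum_smul]
        congr 1
        calc ∑ j ∈ rL.index, counit (R := k) (rL.right j) * lam (rx.left i * rL.left j)
            = ∑ j ∈ rL.index, lam (rx.left i * (counit (R := k) (rL.right j) • rL.left j)) := by
              refine Finset.sum_congr rfl fun j _ => ?_
              rw [mul_smul_comm, map_smul, smul_eq_mul]
          _ = lam (rx.left i * Λ) := by
              rw [← map_sum, ← Finset.mul_sum, sum_smul_counit Λ rL]
    _ = x := by
        have : ∀ i ∈ rx.index, lam (rx.left i * Λ) • rx.right i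
            = counit (R := k) (rx.left i) • rx.right i := by
          intro i _
          rw [hint (rx.left i), map_smul, smul_eq_mul, hnorm, mul_one]
        rw [Finset.sum_congr rfl this, sum_counit_smul x rx]

lemma dual_basis_L2' [FiniteDimensional k A]
    (hri : IsRightIntegralOn k A (Coalgebra.comul (R := k)) lam)
    (hint : IsLeftIntegral k A Λ) (hnorm : lam Λ = 1) {ι : Type*} (rL : Repr k Λ ι) (x : A) :
    ∑ j ∈ rL.index, lam (S° (rL.right j) * x) • rL.left j = x := by
  have hsep : ∀ y : A, (∀ z : A, lam (z * y) = 0) → y = 0 := by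
    intro y hy
    set Φ : A →ₗ[k] Module.Dual k A :=
      (LinearMap.llcomp k A A k lam) ∘ₗ (LinearMap.mul k A) with hΦ
    have hΦapp : ∀ z b : A, Φ z b = lam (z * b) := fun z b => rfl
    have hΦinj : Function.Injective Φ := by
      rw [← LinearMap.ker_eq_bot, LinearMap.ker_eq_bot']
      intro z hz
      have hz' : ∀ b : A, lam (z * b) = 0 := fun b => by
        rw [← hΦapp]; rw [hz]; rfl
      calc z = ∑ j ∈ rL.index, lam (z * rL.left j) • S° (rL.right j) :=
            (dual_basis_L2 lam Λ hri hint hnorm rL z).symm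
        _ = 0 := by simp [hz']
    have hΦsurj : Function.Surjective Φ :=
      (LinearMap.injective_iff_surjective_of_finrank_eq_finrank
        (Subspace.dual_finrank_eq).symm).mp hΦinj
    refine (Module.forall_dual_apply_eq_zero_iff k y).mp fun φ => ?_
    obtain ⟨z, rfl⟩ := hΦsurj φ
    exact hy z
  have key : ∀ z : A, lam (z * (∑ j ∈ rL.index, lam (S° (rL.right j) * x) • rL.left j))
      = lam (z * x) := by
    intro z
    rw [Finset.mul_sum, map_sum]
    have hz := dual_basis_L2 lam Λ hri hint hnorm rL z
    calc ∑ j ∈ rL.index, lam (z * lam (S° (rL.right j) * x) • rL.left j)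
        = ∑ j ∈ rL.index, lam (z * rL.left j) * lam (S° (rL.right j) * x) := by
          refine Finset.sum_congr rfl fun j _ => ?_
          rw [mul_smul_comm, map_smul, smul_eq_mul, mul_comm]
      _ = lam ((∑ j ∈ rL.index, lam (z * rL.left j) • S° (rL.right j)) * x) := by
          rw [Finset.sum_mul, map_sum]
          refine Finset.sum_congr rfl fun j _ => ?_
          rw [smul_mul_assoc, map_smul, smul_eq_mul]
      _ = lam (z * x) := by rw [hz]
  have h0 := hsep ((∑ j ∈ rL.index, lam (S° (rL.right j) * x) • rL.left j) - x)
    (fun z => by rw [mul_sub, map_sub, key z, sub_self])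
  exact sub_eq_zero.mp h0

lemma trace_formula [FiniteDimensional k A]
    (hri : IsRightIntegralOn k A (Coalgebra.comul (R := k)) lam)
    (hint : IsLeftIntegral k A Λ) (hnorm : lam Λ = 1) {ι : Type*} (rL : Repr k Λ ι) (f : A →ₗ[k] A) :
    LinearMap.trace k A f = ∑ j ∈ rL.index, lam (S° (rL.right j) * f (rL.left j)) := by
  have hid : (∑ j ∈ rL.index, dualTensorHom k A A
        ((lam ∘ₗ LinearMap.mulLeft k (S° (rL.right j))) ⊗ₜ[k] rL.left j))
      = LinearMap.id := by
    apply LinearMap.ext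
    intro x
    rw [LinearMap.sum_apply]
    simpa [dualTensorHom_apply] using dual_basis_L2' lam Λ hri hint hnorm rL x
  have hcomp : ∀ (φ : Module.Dual k A) (b : A),
      f ∘ₗ dualTensorHom k A A (φ ⊗ₜ[k] b) = dualTensorHom k A A (φ ⊗ₜ[k] f b) := by
    intro φ b
    apply LinearMap.ext
    intro y
    simp [dualTensorHom_apply]
  calc LinearMap.trace k A f
      = LinearMap.trace k A (f ∘ₗ ∑ j ∈ rL.index, dualTensorHom k A A
          ((lam ∘ₗ LinearMap.mulLeft k (S° (rL.right j))) ⊗ₜ[k] rL.left j)) := by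
        rw [hid, LinearMap.comp_id]
    _ = ∑ j ∈ rL.index, LinearMap.trace k A (dualTensorHom k A A
          ((lam ∘ₗ LinearMap.mulLeft k (S° (rL.right j))) ⊗ₜ[k] f (rL.left j))) := by
        have hsum : f ∘ₗ (∑ j ∈ rL.index, dualTensorHom k A A
              ((lam ∘ₗ LinearMap.mulLeft k (S° (rL.right j))) ⊗ₜ[k] rL.left j))
            = ∑ j ∈ rL.index, dualTensorHom k A A
              ((lam ∘ₗ LinearMap.mulLeft k (S° (rL.right j))) ⊗ₜ[k] f (rL.left j)) := by
          apply LinearMap.ext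
          intro y
          simp only [LinearMap.coe_comp, Function.comp_apply, LinearMap.sum_apply, map_sum,
            dualTensorHom_apply, map_smul]
        rw [hsum, map_sum]
    _ = ∑ j ∈ rL.index, lam (S° (rL.right j) * f (rL.left j)) := by
        refine Finset.sum_congr rfl fun j _ => ?_
        rw [LinearMap.trace_eq_contract_apply, contractLeft_apply]
        rfl

end IntegralLemmas

/-- Let `A` be a finite-dimensional Hopf algebra with a right integral
`λ ∈ A*` and a left integral `Λ ∈ A` with `λ(Λ) = 1`. Then for every `n ∈ ℤ`,
`ν_n(A) = λ(S(Pₙ(Λ)))`. -/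
theorem indicator_eq_integral_formula
    (k : Type*) [Field k] (A : Type*) [Ring A] [HopfAlgebra k A] [FiniteDimensional k A]
    (lam : A →ₗ[k] k) (hri : IsRightIntegralOn k A (Coalgebra.comul (R := k)) lam)
    (Λ : A) (hint : IsLeftIntegral k A Λ) (hnorm : lam Λ = 1) (n : ℤ) :
    indicator k A n = lam (HopfAlgebra.antipode (R := k) (SweedlerP k A n Λ)) := by
  classical
  set rL := Coalgebra.Repr.arbitrary k Λ with hrL
  have htr := trace_formula lam Λ hri hint hnorm rL
    (HopfAlgebra.antipode (R := k) ∘ₗ SweedlerP k A (n - 1))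
  rw [show indicator k A n = LinearMap.trace k A
      (HopfAlgebra.antipode (R := k) ∘ₗ SweedlerP k A (n - 1)) from rfl, htr]
  rcases le_or_gt 1 n with hn | hn
  · set m := (n - 1).toNat with hm
    have h1 : SweedlerP k A (n - 1) = PposGen k A Coalgebra.comul m := by
      rw [SweedlerP, PGen, if_pos (by omega : (0:ℤ) ≤ n - 1)]
    have h2 : SweedlerP k A n = PposGen k A Coalgebra.comul (m + 1) := by
      rw [SweedlerP, PGen, if_pos (by omega : (0:ℤ) ≤ n)]
      congr 1
      omega
    rw [h1, h2]
    calc ∑ j ∈ rL.index, lam (HopfAlgebra.antipode (R := k) (rL.right j) *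
          (HopfAlgebra.antipode (R := k) ∘ₗ PposGen k A Coalgebra.comul m) (rL.left j))
        = ∑ j ∈ rL.index, lam (HopfAlgebra.antipode (R := k)
            (PposGen k A Coalgebra.comul m (rL.left j) * rL.right j)) := by
          refine Finset.sum_congr rfl fun j _ => ?_
          rw [LinearMap.comp_apply, ← antipode_mul]
      _ = lam (HopfAlgebra.antipode (R := k)
            (∑ j ∈ rL.index, PposGen k A Coalgebra.comul m (rL.left j) * rL.right j)) := by
          rw [map_sum, map_sum]
      _ = lam (HopfAlgebra.antipode (R := k) (PposGen k A Coalgebra.comul (m + 1) Λ)) := by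
          congr 1
          rw [show (∑ j ∈ rL.index, PposGen k A Coalgebra.comul m (rL.left j) * rL.right j)
              = cnv (PposGen k A Coalgebra.comul m) LinearMap.id Λ by
            rw [cnv_repr _ _ Λ rL]; rfl]
          rw [Ppos_pred m Λ]
  · set m := (-n).toNat with hm
    have h1 : SweedlerP k A (n - 1) = HopfAlgebra.antipode (R := k) ∘ₗ
        QposGen k A Coalgebra.comul (m + 1) := by
      rw [SweedlerP, PGen, if_neg (by omega : ¬ (0:ℤ) ≤ n - 1),
        show (-(n - 1)).toNat = m + 1 by omega]
    rw [h1]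
    calc ∑ j ∈ rL.index, lam (HopfAlgebra.antipode (R := k) (rL.right j) *
          (HopfAlgebra.antipode (R := k) ∘ₗ (HopfAlgebra.antipode (R := k) ∘ₗ
            QposGen k A Coalgebra.comul (m + 1))) (rL.left j))
        = ∑ j ∈ rL.index, lam (HopfAlgebra.antipode (R := k)
            (HopfAlgebra.antipode (R := k)
              (QposGen k A Coalgebra.comul (m + 1) (rL.left j)) * rL.right j)) := by
          refine Finset.sum_congr rfl fun j _ => ?_
          rw [LinearMap.comp_apply, LinearMap.comp_apply, ← antipode_mul]
      _ = lam (HopfAlgebra.antipode (R := k) (∑ j ∈ rL.index,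
            HopfAlgebra.antipode (R := k)
              (QposGen k A Coalgebra.comul (m + 1) (rL.left j)) * rL.right j)) := by
          rw [map_sum, map_sum]
      _ = lam (HopfAlgebra.antipode (R := k) (HopfAlgebra.antipode (R := k)
            (QposGen k A Coalgebra.comul m Λ))) := by
          rw [SQ_step m Λ rL]
      _ = lam (HopfAlgebra.antipode (R := k) (SweedlerP k A n Λ)) := by
          by_cases h0 : n = 0
          · subst h0
            rw [show SweedlerP k A 0 = PposGen k A Coalgebra.comul 0 by
                rw [SweedlerP, PGen, if_pos le_rfl]; rfl]
            rw [show m = 0 by omega]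
            rw [Qpos_zero_apply, Ppos_zero_apply]
            simp [map_smul, antipode_one]
          · rw [show SweedlerP k A n = HopfAlgebra.antipode (R := k) ∘ₗ
                QposGen k A Coalgebra.comul m by
              rw [SweedlerP, PGen, if_neg (by omega : ¬ (0:ℤ) ≤ n)]]
            rfl
end
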